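/- arXiv:0804.1597 — 7 statements merged into one kernel-verified Lean document; each statement's English description precedes it below -/
import Mathlib

section
/- Let S be a closed subspace of L²(ℝ) that is invariant under integer translations. Then the set M = {θ ∈ ℝ : T_θ f ∈ S for all f ∈ S} is a closed additive subgroup of ℝ containing ℤ. -/
open MeasureTheory

noncomputable section

/-- The space `L²(ℝ)` of complex-valued square-integrable functions. -/
abbrev L2 := Lp ℂ 2 (volume : Measure ℝ)

/-- The translation operator `T_a f (x) = f (x - a)` on `L²(ℝ)`. -/
def Tr (a : ℝ) : L2 → L2 :=
  Lp.compMeasurePreserving (fun x => x - a) (measurePreserving_sub_right volume a)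

lemma Tr_coeFn (a : ℝ) (f : L2) : Tr a f =ᵐ[volume] fun x => f (x - a) :=
  Lp.coeFn_compMeasurePreserving f (measurePreserving_sub_right volume a)

lemma Tr_zero (f : L2) : Tr 0 f = f := by
  refine Lp.ext ((Tr_coeFn 0 f).trans ?_)
  filter_upwards with x
  simp

lemma Tr_add (a b : ℝ) (f : L2) : Tr (a + b) f = Tr a (Tr b f) := by
  refine (Lp.ext (Filter.EventuallyEq.trans ?_ (Tr_coeFn (a + b) f).symm)).symm
  have h1 : Tr a (Tr b f) =ᵐ[volume] fun x => (Tr b f) (x - a) := Tr_coeFn a (Tr b f)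
  have h2 : (fun x => (Tr b f) (x - a)) =ᵐ[volume] fun x => f (x - a - b) := by
    have := ae_eq_comp (f := fun x : ℝ => x - a)
      (measurable_sub_const a).aemeasurable
      (g := (Tr b f : ℝ → ℂ)) (g' := fun x => f (x - b))
      (by rw [(measurePreserving_sub_right volume a).map_eq]; exact Tr_coeFn b f)
    exact this
  refine (h1.trans h2).trans ?_
  filter_upwards with x
  rw [sub_sub]

lemma Tr_continuous (f : L2) : Continuous fun θ : ℝ => Tr θ f := by
  have hg : Continuous fun θ : ℝ => (ContinuousMap.mk (fun x : ℝ => x - θ) (by fun_prop)) :=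
    ContinuousMap.continuous_of_continuous_uncurry _ (continuous_snd.sub continuous_fst)
  exact Continuous.compMeasurePreservingLp (f := fun _ : ℝ => f) continuous_const hg
    (fun θ => measurePreserving_sub_right volume θ) (by norm_num)

/-- If `S` is a closed subspace of `L²(ℝ)` invariant under integer translations, then
`M = {θ : T_θ f ∈ S for all f ∈ S}` is a closed additive subgroup of `ℝ` containing `ℤ`. -/
theorem stmt0 (S : Submodule ℂ L2) (hS : IsClosed (S : Set L2))
    (hinv : ∀ f ∈ S, ∀ k : ℤ, Tr (k : ℝ) f ∈ S) :
    ∃ M : AddSubgroup ℝ,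
      (M : Set ℝ) = {θ : ℝ | ∀ f ∈ S, Tr θ f ∈ S} ∧
      IsClosed (M : Set ℝ) ∧
      ∀ k : ℤ, (k : ℝ) ∈ M := by
  set Mset : Set ℝ := {θ : ℝ | ∀ f ∈ S, Tr θ f ∈ S} with hMset
  have h0 : (0 : ℝ) ∈ Mset := fun f hf => by rw [Tr_zero]; exact hf
  have hadd : ∀ a ∈ Mset, ∀ b ∈ Mset, a + b ∈ Mset := fun a ha b hb f hf => by
    rw [Tr_add]; exact ha _ (hb f hf)
  have hz : ∀ k : ℤ, (k : ℝ) ∈ Mset := fun k f hf => hinv f hf k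
  have hclosed : IsClosed Mset := by
    have : Mset = ⋂ f ∈ (S : Set L2), (fun θ : ℝ => Tr θ f) ⁻¹' (S : Set L2) := by
      ext θ; simp [hMset, Set.mem_iInter]
    rw [this]
    exact isClosed_biInter fun f _ => hS.preimage (Tr_continuous f)
  -- the submonoid structure on Mset
  let Msm : AddSubmonoid ℝ :=
    { carrier := Mset
      zero_mem' := h0
      add_mem' := fun {a b} ha hb => hadd a ha b hb }
  have hneg : ∀ θ ∈ Mset, -θ ∈ Mset := by
    intro θ hθ
    -- N: submonoid generated by θ and the integers
    set N : AddSubmonoid ℝ :=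
      AddSubmonoid.closure ({θ} ∪ Set.range (Int.cast : ℤ → ℝ)) with hN
    have hNM : (N : Set ℝ) ⊆ Mset := by
      have : N ≤ Msm := AddSubmonoid.closure_le.mpr
        (Set.union_subset (Set.singleton_subset_iff.mpr hθ) (by rintro _ ⟨k, rfl⟩; exact hz k))
      exact this
    have hzN : ∀ k : ℤ, (k : ℝ) ∈ N := fun k =>
      AddSubmonoid.subset_closure (Set.mem_union_right _ ⟨k, rfl⟩)
    have hθN : θ ∈ N := AddSubmonoid.subset_closure (Set.mem_union_left _ rfl)
    haveI : Fact ((0 : ℝ) < 1) := ⟨zero_lt_one⟩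
    set π : ℝ → AddCircle (1 : ℝ) := (QuotientAddGroup.mk : ℝ → AddCircle (1 : ℝ)) with hπ
    -- N is saturated
    have hsat : π ⁻¹' (π '' (N : Set ℝ)) = (N : Set ℝ) := by
      apply Set.Subset.antisymm
      · rintro y ⟨x, hxN, hxy⟩
        have : (x : AddCircle (1 : ℝ)) = (y : AddCircle (1 : ℝ)) := hxy
        rw [QuotientAddGroup.eq_iff_sub_mem] at this
        obtain ⟨k, hk⟩ := AddSubgroup.mem_zmultiples_iff.mp this
        have hk' : x - y = (k : ℝ) := by rw [← hk]; simp
        have : y = x + ((-k : ℤ) : ℝ) := by push_cast; linarith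
        rw [this]
        exact N.add_mem hxN (hzN _)
      · exact fun x hx => ⟨x, hx, rfl⟩
    -- image of N in the circle
    have himg : -(π θ) ∈ closure (π '' (N : Set ℝ)) := by
      have hle : AddSubmonoid.closure {π θ} ≤
          AddSubmonoid.map (QuotientAddGroup.mk' (AddSubgroup.zmultiples (1:ℝ))) N :=
        AddSubmonoid.closure_le.mpr (Set.singleton_subset_iff.mpr ⟨θ, hθN, rfl⟩)
      have hsub : (AddSubmonoid.closure {π θ} : Set (AddCircle (1:ℝ))) ⊆
          π '' (N : Set ℝ) := fun x hx => by
        obtain ⟨y, hy, rfl⟩ := hle hx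
        exact ⟨y, hy, rfl⟩
      have key : -(π θ) ∈ closure (AddSubmonoid.closure {π θ} : Set (AddCircle (1:ℝ))) := by
        rw [closure_addSubmonoidClosure_eq_closure_addSubgroupClosure]
        exact subset_closure (AddSubgroup.neg_mem _ (AddSubgroup.subset_closure rfl))
      exact closure_mono hsub key
    have hopen : IsOpenMap π := QuotientAddGroup.isOpenMap_coe
    have : -θ ∈ π ⁻¹' (closure (π '' (N : Set ℝ))) := by
      have : π (-θ) = -(π θ) := by simp [hπ]
      simpa [Set.mem_preimage, this] using himg
    rw [hopen.preimage_closure_eq_closure_preimage continuous_quotient_mk' _, hsat] at this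
    exact hclosed.closure_subset_iff.mpr hNM this
  refine ⟨{ carrier := Mset, zero_mem' := h0,
            add_mem' := fun {a b} ha hb => hadd a ha b hb,
            neg_mem' := fun {a} ha => hneg a ha }, rfl, hclosed, hz⟩

end
end

section
/- Let S be a shift-invariant subspace of L²(ℝ). Then either S is invariant under all real translations, or there exists a maximum positive integer n such that S is invariant under translations by (1/n)ℤ. -/
open MeasureTheory Filter Topology

noncomputable section

lemma continuous_Tr (f : L2) : Continuous fun a : ℝ => Tr a f := by
  have hg : Continuous fun a : ℝ => ContinuousMap.mk (fun x : ℝ => x - a)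
      (by continuity) := by
    apply ContinuousMap.continuous_of_continuous_uncurry
    exact continuous_snd.sub continuous_fst
  have := Continuous.compMeasurePreservingLp (f := fun _ : ℝ => f)
    (g := fun a : ℝ => ContinuousMap.mk (fun x : ℝ => x - a) (by continuity))
    continuous_const hg
    (fun a => measurePreserving_sub_right volume a) (by norm_num)
  exact this

/-- If `S` is a shift-invariant subspace of `L²(ℝ)`, then either `S` is invariant under all
real translations, or there is a maximum positive integer `n` such that `S` is
`(1/n)ℤ`-invariant. -/
theorem stmt2 (S : Submodule ℂ L2) (hS : IsClosed (S : Set L2))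
    (hinv : ∀ f ∈ S, ∀ k : ℤ, Tr (k : ℝ) f ∈ S) :
    (∀ θ : ℝ, ∀ f ∈ S, Tr θ f ∈ S) ∨
    (∃ n : ℕ, 0 < n ∧ (∀ f ∈ S, ∀ j : ℤ, Tr ((j : ℝ) / n) f ∈ S) ∧
      ∀ m : ℕ, 0 < m → (∀ f ∈ S, ∀ j : ℤ, Tr ((j : ℝ) / m) f ∈ S) → m ≤ n) := by
  set A : Set ℕ := {m : ℕ | 0 < m ∧ ∀ f ∈ S, ∀ j : ℤ, Tr ((j : ℝ) / m) f ∈ S} with hA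
  have h1 : 1 ∈ A := by
    refine ⟨one_pos, fun f hf j => ?_⟩
    simpa using hinv f hf j
  by_cases hbdd : BddAbove A
  · right
    refine ⟨sSup A, (Nat.sSup_mem ⟨1, h1⟩ hbdd).1, (Nat.sSup_mem ⟨1, h1⟩ hbdd).2,
      fun m hm hminv => le_csSup hbdd ⟨hm, hminv⟩⟩
  · left
    intro θ f hf
    -- choose, for each i, some m i ∈ A with m i > i
    have hchoice : ∀ i : ℕ, ∃ m : ℕ, m ∈ A ∧ i < m := by
      intro i
      by_contra h
      push_neg at h
      exact hbdd ⟨i, fun m hm => not_lt.mp fun hlt => absurd (h m hm) (not_le.mpr hlt)⟩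
    choose m hmA hmgt using hchoice
    set a : ℕ → ℝ := fun i => (⌊θ * m i⌋ : ℝ) / m i with ha
    have hmpos : ∀ i, (0 : ℝ) < m i := fun i => by
      exact_mod_cast (hmA i).1
    have hmem : ∀ i, Tr (a i) f ∈ S := fun i => (hmA i).2 f hf ⌊θ * m i⌋
    -- a i → θ
    have hm_tendsto : Tendsto (fun i => (m i : ℝ)) atTop atTop := by
      apply tendsto_natCast_atTop_atTop.comp
      exact tendsto_atTop_mono (fun i => (hmgt i).le) tendsto_id
    have hinv_tendsto : Tendsto (fun i => 1 / (m i : ℝ)) atTop (𝓝 0) :=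
      tendsto_one_div_atTop_nhds_zero_nat.comp
        (tendsto_atTop_mono (fun i => (hmgt i).le) tendsto_id)
    have hlow : Tendsto (fun i => θ - 1 / (m i : ℝ)) atTop (𝓝 θ) := by
      simpa using tendsto_const_nhds.sub hinv_tendsto
    have ha_tendsto : Tendsto a atTop (𝓝 θ) := by
      refine tendsto_of_tendsto_of_tendsto_of_le_of_le hlow tendsto_const_nhds
        (fun i => ?_) (fun i => ?_)
      · rw [ha]
        dsimp only
        rw [sub_le_iff_le_add, ← add_div, le_div_iff₀ (hmpos i)]
        linarith [Int.lt_floor_add_one (θ * m i)]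
      · rw [ha]
        dsimp only
        rw [div_le_iff₀ (hmpos i)]
        exact Int.floor_le (θ * m i)
    have : Tendsto (fun i => Tr (a i) f) atTop (𝓝 (Tr θ f)) :=
      ((continuous_Tr f).tendsto θ).comp ha_tendsto
    exact hS.mem_of_tendsto this (Eventually.of_forall hmem)
end
end

section
/- Let f ∈ L²(ℝ) and let g ∈ S(f), the closed linear span of {T_j f : j ∈ ℤ}. Then there exists a ℤ-periodic measurable function m such that ĝ = m·f̂ almost everywhere. -/
open MeasureTheory FourierTransform

noncomputable section

/-- `F` is the Fourier–Plancherel transform on `L²(ℝ)`: a unitary that agrees with the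
classical Fourier integral `f̂(ω) = ∫ f(x) e^{-2πiωx} dx` on integrable functions. -/
def IsFourierTransform (F : L2 ≃ₗᵢ[ℂ] L2) : Prop :=
  ∀ f : L2, Integrable (f : ℝ → ℂ) volume → (F f : ℝ → ℂ) =ᵐ[volume] 𝓕 (f : ℝ → ℂ)

/-- The shift-invariant space generated by `f`: the closed span of integer translates. -/
def SIS (f : L2) : Set L2 :=
  closure (Submodule.span ℂ {g : L2 | ∃ j : ℤ, g = Tr (j : ℝ) f} : Set L2)

namespace Stmt5Aux

open Complex Real Filter Topology

/-- The modulation character `ω ↦ e^{-2πiaω}`. -/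
def ec (a : ℝ) : ℝ → ℂ := fun ω => Complex.exp ((-(2 * π * (a * ω)) : ℝ) * Complex.I)

lemma ec_abs (a ω : ℝ) : ‖ec a ω‖ = 1 := by
  simp [ec, Complex.norm_exp]

lemma ec_norm (a ω : ℝ) : ‖ec a ω‖ = 1 := by
  rw [ec_abs]

lemma ec_continuous (a : ℝ) : Continuous (ec a) := by
  unfold ec; fun_prop

lemma ec_measurable (a : ℝ) : Measurable (ec a) := (ec_continuous a).measurable

lemma ec_periodic (j : ℤ) (ω : ℝ) (k : ℤ) : ec (j : ℝ) (ω + k) = ec (j : ℝ) ω := by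
  unfold ec
  have h : (-(2 * π * ((j : ℝ) * (ω + k))) : ℝ) =
      -(2 * π * ((j : ℝ) * ω)) + ((-(j * k) : ℤ) : ℝ) * (2 * π) := by
    push_cast; ring
  rw [h, Complex.ofReal_add, add_mul, Complex.exp_add]
  have h2 : ((((-(j * k) : ℤ) : ℝ) * (2 * π) : ℝ) : ℂ) * Complex.I =
      ((-(j * k) : ℤ) : ℂ) * (2 * π * Complex.I) := by
    push_cast; ring
  rw [h2, Complex.exp_int_mul_two_pi_mul_I, mul_one]

lemma fourier_congr {f g : ℝ → ℂ} (h : f =ᵐ[volume] g) : 𝓕 f = 𝓕 g := by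
  ext w
  rw [Real.fourier_real_eq, Real.fourier_real_eq]
  exact integral_congr_ae (h.mono fun x hx => by dsimp only; rw [hx])

lemma fourier_translate (h : ℝ → ℂ) (a w : ℝ) :
    𝓕 (fun x => h (x - a)) w = ec a w * 𝓕 h w := by
  rw [Real.fourier_real_eq, Real.fourier_real_eq]
  rw [← MeasureTheory.integral_add_right_eq_self (fun v : ℝ => 𝐞 (-(v * w)) • h (v - a)) a]
  simp only [add_sub_cancel_right]
  rw [← MeasureTheory.integral_const_mul]
  congr 1; ext v
  rw [Circle.smul_def, Circle.smul_def, Real.fourierChar_apply, Real.fourierChar_apply]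
  unfold ec
  simp only [smul_eq_mul]
  rw [← mul_assoc, ← Complex.exp_add]
  congr 1
  push_cast
  ring

lemma memℒp_ec_mul (a : ℝ) (u : L2) :
    MemLp (fun ω => ec a ω * (u : ℝ → ℂ) ω) 2 volume := by
  refine ⟨(ec_continuous a).aestronglyMeasurable.mul (Lp.aestronglyMeasurable u), ?_⟩
  rw [eLpNorm_congr_norm_ae (g := (u : ℝ → ℂ))
    (ae_of_all _ fun ω => by simp [norm_mul, ec_abs])]
  exact (Lp.memLp u).2

/-- Multiplication by the character `ec a`, as a map `L² → L²`. -/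
def Mod (a : ℝ) (u : L2) : L2 := (memℒp_ec_mul a u).toLp _

lemma Mod_coe (a : ℝ) (u : L2) :
    (Mod a u : ℝ → ℂ) =ᵐ[volume] fun ω => ec a ω * (u : ℝ → ℂ) ω :=
  MemLp.coeFn_toLp _

lemma dist_Mod (a : ℝ) (u v : L2) : dist (Mod a u) (Mod a v) = dist u v := by
  rw [dist_eq_norm, dist_eq_norm, Lp.norm_def, Lp.norm_def]
  congr 1
  have h1 : ((Mod a u - Mod a v : L2) : ℝ → ℂ) =ᵐ[volume]
      fun ω => ec a ω * ((u : ℝ → ℂ) ω - (v : ℝ → ℂ) ω) := by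
    filter_upwards [Lp.coeFn_sub (Mod a u) (Mod a v), Mod_coe a u, Mod_coe a v] with ω e1 e2 e3
    simp only [Pi.sub_apply] at e1 ⊢
    rw [e1, e2, e3]; ring
  rw [eLpNorm_congr_ae h1, eLpNorm_congr_ae (Lp.coeFn_sub u v)]
  apply eLpNorm_congr_norm_ae
  filter_upwards with ω
  simp [norm_mul, ec_abs]

lemma Mod_continuous (a : ℝ) : Continuous (Mod a) :=
  (Isometry.of_dist_eq (dist_Mod a)).continuous

lemma dense_integrable : Dense {h : L2 | Integrable (h : ℝ → ℂ) volume} := by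
  rw [Metric.dense_iff]
  intro h ε hε
  obtain ⟨g0, g0supp, hclose, g0cont, g0mem⟩ :=
    (Lp.memLp h).exists_hasCompactSupport_eLpNorm_sub_le (p := 2)
      (by norm_num : (2 : ENNReal) ≠ ⊤)
      (ε := ENNReal.ofReal (ε / 2))
      (by simp only [ne_eq, ENNReal.ofReal_eq_zero, not_le]; linarith)
  refine ⟨g0mem.toLp g0, Metric.mem_ball.mpr ?_, ?_⟩
  · have hd : dist (g0mem.toLp g0) h = (eLpNorm ((h : ℝ → ℂ) - g0) 2 volume).toReal := by
      rw [dist_comm, dist_eq_norm, Lp.norm_def]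
      congr 1
      apply eLpNorm_congr_ae
      filter_upwards [Lp.coeFn_sub h (g0mem.toLp g0), MemLp.coeFn_toLp g0mem] with ω e1 e2
      simp only [Pi.sub_apply] at e1 ⊢
      rw [e1, e2]
    rw [hd]
    calc (eLpNorm ((h : ℝ → ℂ) - g0) 2 volume).toReal
        ≤ (ENNReal.ofReal (ε / 2)).toReal :=
          ENNReal.toReal_mono ENNReal.ofReal_ne_top hclose
      _ = ε / 2 := ENNReal.toReal_ofReal (by linarith)
      _ < ε := by linarith
  · exact (g0cont.integrable_of_hasCompactSupport g0supp).congr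
      (MemLp.coeFn_toLp g0mem).symm

lemma F_Tr (F : L2 ≃ₗᵢ[ℂ] L2) (hF : IsFourierTransform F) (a : ℝ) (h : L2) :
    F (Tr a h) = Mod a (F h) := by
  have hc1 : Continuous (fun h : L2 => F (Tr a h)) :=
    F.continuous.comp
      (Lp.isometry_compMeasurePreserving
        (measurePreserving_sub_right volume a) (E := ℂ) (p := 2)).continuous
  have hc2 : Continuous (fun h : L2 => Mod a (F h)) :=
    (Mod_continuous a).comp F.continuous
  have heq : Set.EqOn (fun h : L2 => F (Tr a h)) (fun h : L2 => Mod a (F h))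
      {h : L2 | Integrable (h : ℝ → ℂ) volume} := by
    intro h hh
    simp only [Set.mem_setOf_eq] at hh
    apply Lp.ext
    have hTr : (Tr a h : ℝ → ℂ) =ᵐ[volume] fun x => (h : ℝ → ℂ) (x - a) :=
      Lp.coeFn_compMeasurePreserving h (measurePreserving_sub_right volume a)
    have hTrInt : Integrable (Tr a h : ℝ → ℂ) volume :=
      (hh.comp_sub_right a).congr hTr.symm
    calc (F (Tr a h) : ℝ → ℂ)
        =ᵐ[volume] 𝓕 ((Tr a h : ℝ → ℂ)) := hF _ hTrInt
      _ = 𝓕 (fun x => (h : ℝ → ℂ) (x - a)) := fourier_congr hTr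
      _ = fun w => ec a w * 𝓕 (h : ℝ → ℂ) w := funext fun w => fourier_translate _ a w
      _ =ᵐ[volume] fun w => ec a w * (F h : ℝ → ℂ) w := by
          filter_upwards [hF h hh] with w hw
          rw [hw]
      _ =ᵐ[volume] (Mod a (F h) : ℝ → ℂ) := (Mod_coe a (F h)).symm
  exact congrFun (Continuous.ext_on dense_integrable hc1 hc2 heq) h

end Stmt5Aux

/-- If `g ∈ S(f)`, the closed span of integer translates of `f`, then there is a
`ℤ`-periodic measurable function `m` with `ĝ = m · f̂` a.e. -/
theorem stmt5 (F : L2 ≃ₗᵢ[ℂ] L2) (hF : IsFourierTransform F)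
    (f g : L2) (hg : g ∈ SIS f) :
    ∃ m : ℝ → ℂ, Measurable m ∧ (∀ ω : ℝ, ∀ k : ℤ, m (ω + k) = m ω) ∧
      (F g : ℝ → ℂ) =ᵐ[volume] fun ω => m ω * (F f : ℝ → ℂ) ω := by
  classical
  open Stmt5Aux Filter Topology in
  set P : L2 → Prop := fun g => ∃ m : ℝ → ℂ, Measurable m ∧
      (∀ ω : ℝ, ∀ k : ℤ, m (ω + k) = m ω) ∧
      (F g : ℝ → ℂ) =ᵐ[volume] fun ω => m ω * (F f : ℝ → ℂ) ω with hPdef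
  suffices hPg : P g from hPg
  have hspan : ∀ x ∈ (Submodule.span ℂ {g : L2 | ∃ j : ℤ, g = Tr (j : ℝ) f} :
      Submodule ℂ L2), P x := by
    intro x hx
    induction hx using Submodule.span_induction with
    | mem x hx =>
      obtain ⟨j, rfl⟩ := hx
      refine ⟨ec (j : ℝ), ec_measurable _, fun ω k => ec_periodic j ω k, ?_⟩
      rw [F_Tr F hF (j : ℝ) f]
      exact Mod_coe _ _
    | zero =>
      refine ⟨0, measurable_const, fun ω k => rfl, ?_⟩
      rw [map_zero]
      filter_upwards [Lp.coeFn_zero ℂ 2 (volume : Measure ℝ)] with ω hω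
      simp [hω]
    | add x y hxmem hymem hx hy =>
      obtain ⟨m1, hm1, hp1, he1⟩ := hx
      obtain ⟨m2, hm2, hp2, he2⟩ := hy
      refine ⟨m1 + m2, hm1.add hm2, fun ω k => by simp [hp1 ω k, hp2 ω k], ?_⟩
      rw [map_add]
      filter_upwards [Lp.coeFn_add (F x) (F y), he1, he2] with ω h0 h1 h2
      simp only [Pi.add_apply] at h0 ⊢
      rw [h0, h1, h2]; ring
    | smul c x hxmem hx =>
      obtain ⟨m1, hm1, hp1, he1⟩ := hx
      refine ⟨fun ω => c * m1 ω, measurable_const.mul hm1,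
        fun ω k => by simp [hp1 ω k], ?_⟩
      rw [F.map_smul]
      filter_upwards [Lp.coeFn_smul c (F x), he1] with ω h0 h1
      simp only [Pi.smul_apply, smul_eq_mul] at h0 ⊢
      rw [h0, h1]; ring
  rw [SIS, mem_closure_iff_seq_limit] at hg
  obtain ⟨x, hxmem, hxlim⟩ := hg
  have hPx : ∀ n, P (x n) := fun n => hspan _ (hxmem n)
  choose m hm_meas hm_per hm_eq using hPx
  have hFlim : Tendsto (fun n => F (x n)) atTop (𝓝 (F g)) :=
    (F.continuous.tendsto g).comp hxlim
  have hmeas := tendstoInMeasure_of_tendsto_Lp hFlim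
  obtain ⟨ns, -, hae⟩ := hmeas.exists_seq_tendsto_ae
  have hcomb : ∀ᵐ ω ∂(volume : Measure ℝ),
      Tendsto (fun k => m (ns k) ω * (F f : ℝ → ℂ) ω) atTop (𝓝 ((F g : ℝ → ℂ) ω)) := by
    have hall : ∀ᵐ ω ∂(volume : Measure ℝ),
        ∀ k : ℕ, (F (x (ns k)) : ℝ → ℂ) ω = m (ns k) ω * (F f : ℝ → ℂ) ω :=
      ae_all_iff.mpr fun k => hm_eq (ns k)
    filter_upwards [hall, hae] with ω h1 h2
    exact h2.congr fun k => h1 k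
  set S : Set ℝ := {ω | ∃ c, Tendsto (fun k => m (ns k) ω) atTop (𝓝 c)} with hSdef
  have hSmeas : MeasurableSet S := measurableSet_exists_tendsto fun k => hm_meas (ns k)
  set M : ℝ → ℂ := fun ω =>
    if h : ∃ c, Tendsto (fun k => m (ns k) ω) atTop (𝓝 c) then h.choose else 0 with hMdef
  have hM_lim : ∀ ω, Tendsto (fun k => S.piecewise (fun ω => m (ns k) ω) 0 ω)
      atTop (𝓝 (M ω)) := by
    intro ω
    by_cases h : ∃ c, Tendsto (fun k => m (ns k) ω) atTop (𝓝 c)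
    · have hmem : ω ∈ S := h
      simp only [hMdef, dif_pos h, Set.piecewise_eq_of_mem _ _ _ hmem]
      exact h.choose_spec
    · have hmem : ω ∉ S := h
      simp only [hMdef, dif_neg h, Set.piecewise_eq_of_notMem _ _ _ hmem, Pi.zero_apply]
      exact tendsto_const_nhds
  refine ⟨M, ?_, ?_, ?_⟩
  · exact measurable_of_tendsto_metrizable' atTop
      (fun k => Measurable.piecewise hSmeas (hm_meas (ns k)) measurable_const)
      (tendsto_pi_nhds.mpr hM_lim)
  · intro ω k
    have hseq : (fun n : ℕ => m (ns n) (ω + (k : ℝ))) = fun n => m (ns n) ω :=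
      funext fun n => hm_per (ns n) ω k
    by_cases h : ∃ c, Tendsto (fun n => m (ns n) ω) atTop (𝓝 c)
    · have h' : ∃ c, Tendsto (fun n => m (ns n) (ω + (k : ℝ))) atTop (𝓝 c) := by
        rw [hseq]; exact h
      simp only [hMdef, dif_pos h, dif_pos h']
      have t1 : Tendsto (fun n => m (ns n) (ω + (k : ℝ))) atTop (𝓝 h'.choose) :=
        h'.choose_spec
      have t2 : Tendsto (fun n => m (ns n) (ω + (k : ℝ))) atTop (𝓝 h.choose) := by
        rw [hseq]; exact h.choose_spec
      exact tendsto_nhds_unique t1 t2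
    · have h' : ¬ ∃ c, Tendsto (fun n => m (ns n) (ω + (k : ℝ))) atTop (𝓝 c) := by
        rw [hseq]; exact h
      simp only [hMdef, dif_neg h, dif_neg h']
  · filter_upwards [hcomb] with ω hω
    by_cases hzero : (F f : ℝ → ℂ) ω = 0
    · have h0 : Tendsto (fun _ : ℕ => (0 : ℂ)) atTop (𝓝 ((F g : ℝ → ℂ) ω)) := by
        simpa [hzero] using hω
      have hg0 : (F g : ℝ → ℂ) ω = 0 := (tendsto_nhds_unique h0 tendsto_const_nhds)
      simp [hzero, hg0]
    · have hconv : Tendsto (fun k => m (ns k) ω) atTop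
        (𝓝 ((F g : ℝ → ℂ) ω / (F f : ℝ → ℂ) ω)) := by
        have := hω.div_const ((F f : ℝ → ℂ) ω)
        simpa [mul_div_assoc, div_self hzero] using this
      have hmem : ∃ c, Tendsto (fun k => m (ns k) ω) atTop (𝓝 c) := ⟨_, hconv⟩
      have hMω : M ω = (F g : ℝ → ℂ) ω / (F f : ℝ → ℂ) ω := by
        simp only [hMdef, dif_pos hmem]
        exact tendsto_nhds_unique hmem.choose_spec hconv
      rw [hMω, div_mul_cancel₀ _ hzero]
end
end

section
/- Let f ∈ L²(ℝ) and let m be a ℤ-periodic measurable function such that m·f̂ ∈ L²(ℝ). Then the function g defined by ĝ = m·f̂ belongs to S(f), the closed linear span of the integer translates of f. -/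
open MeasureTheory FourierTransform
open scoped ENNReal NNReal

noncomputable section

namespace Stmt6Aux

/-- The modulation character `ω ↦ e^{-2πiaω}`. -/
def ch (a : ℝ) (ω : ℝ) : ℂ := (𝐞 (-(a * ω)) : Circle)

lemma norm_ch (a ω : ℝ) : ‖ch a ω‖ = 1 := by
  simpa [ch] using Circle.norm_coe _

lemma continuous_ch (a : ℝ) : Continuous (ch a) := by
  unfold ch
  exact continuous_subtype_val.comp
    (Real.continuous_fourierChar.comp (by continuity))

lemma measurable_ch (a : ℝ) : Measurable (ch a) := (continuous_ch a).measurable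

lemma memℒp_ch_mul (a : ℝ) (v : L2) :
    MemLp (fun ω => ch a ω * (v : ℝ → ℂ) ω) 2 volume := by
  refine ⟨((continuous_ch a).aestronglyMeasurable).mul (Lp.aestronglyMeasurable v), ?_⟩
  have : eLpNorm (fun ω => ch a ω * (v : ℝ → ℂ) ω) 2 volume
      = eLpNorm (v : ℝ → ℂ) 2 volume := by
    apply eLpNorm_congr_norm_ae
    filter_upwards with ω
    rw [norm_mul, norm_ch, one_mul]
  rw [this]
  exact Lp.eLpNorm_lt_top v

/-- Multiplication by the character `ch a` as a map `L² → L²`. -/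
def mulOp (a : ℝ) (v : L2) : L2 := (memℒp_ch_mul a v).toLp _

lemma mulOp_coeFn (a : ℝ) (v : L2) :
    (mulOp a v : ℝ → ℂ) =ᵐ[volume] fun ω => ch a ω * (v : ℝ → ℂ) ω :=
  MemLp.coeFn_toLp _

lemma mulOp_isometry (a : ℝ) : Isometry (mulOp a) := by
  apply Isometry.of_dist_eq
  intro v w
  rw [Lp.dist_def, Lp.dist_def]
  congr 1
  have h1 : (⇑(mulOp a v) - ⇑(mulOp a w)) =ᵐ[volume]
      fun ω => ch a ω * ((v : ℝ → ℂ) ω - (w : ℝ → ℂ) ω) := by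
    filter_upwards [mulOp_coeFn a v, mulOp_coeFn a w] with ω h1 h2
    simp only [Pi.sub_apply, h1, h2]
    ring
  rw [eLpNorm_congr_ae h1]
  apply eLpNorm_congr_norm_ae
  filter_upwards with ω
  rw [norm_mul, norm_ch, one_mul, Pi.sub_apply]

lemma tr_coeFn (a : ℝ) (u : L2) :
    (Tr a u : ℝ → ℂ) =ᵐ[volume] fun x => (u : ℝ → ℂ) (x - a) :=
  Lp.coeFn_compMeasurePreserving u _

lemma tr_continuous (a : ℝ) : Continuous (Tr a) :=
  (Lp.isometry_compMeasurePreserving (E := ℂ) (p := 2)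
    (measurePreserving_sub_right volume a)).continuous

lemma fourierIntegral_congr_ae {u v : ℝ → ℂ} (h : u =ᵐ[volume] v) : 𝓕 u = 𝓕 v := by
  funext ω
  rw [Real.fourier_real_eq, Real.fourier_real_eq]
  exact integral_congr_ae (h.mono fun x hx => by simp only [hx])

lemma fourier_shift (u : ℝ → ℂ) (a : ℝ) :
    𝓕 (fun x => u (x - a)) = fun ω => ch a ω * 𝓕 u ω := by
  have heq : (fun x => u (x - a)) = u ∘ fun v => v + (-a) := by
    funext x; simp [sub_eq_add_neg]
  have h := Fourier.fourierIntegral_comp_add_right 𝐞 volume u (-a)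
  have h2 : 𝓕 (u ∘ fun v => v + (-a)) = fun w => 𝐞 ((-a) * w) • 𝓕 u w := by
    funext w; rw [Real.fourier_real_eq, Real.fourier_real_eq, ← Fourier.fourierIntegral_def,
      ← Fourier.fourierIntegral_def]; exact congrFun h w
  rw [heq, h2]
  funext ω
  rw [Circle.smul_def]
  rw [neg_mul]; rfl

/-- The Fourier transform carries translation to modulation, first for integrable `u`. -/
lemma key_tr_of_integrable (F : L2 ≃ₗᵢ[ℂ] L2) (hF : IsFourierTransform F) (a : ℝ)
    (u : L2) (hu : Integrable (u : ℝ → ℂ) volume) : F (Tr a u) = mulOp a (F u) := by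
  have hTr : (Tr a u : ℝ → ℂ) =ᵐ[volume] fun x => (u : ℝ → ℂ) (x - a) := tr_coeFn a u
  have hint : Integrable (fun x => (u : ℝ → ℂ) (x - a)) volume :=
    ((measurePreserving_sub_right volume a).integrable_comp
      hu.aestronglyMeasurable).mpr hu
  have hTrInt : Integrable (Tr a u : ℝ → ℂ) volume := hint.congr hTr.symm
  have h1 : (F (Tr a u) : ℝ → ℂ) =ᵐ[volume] 𝓕 (Tr a u : ℝ → ℂ) := hF _ hTrInt
  have h2 : 𝓕 (Tr a u : ℝ → ℂ) = 𝓕 (fun x => (u : ℝ → ℂ) (x - a)) :=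
    fourierIntegral_congr_ae hTr
  have h3 : 𝓕 (fun x => (u : ℝ → ℂ) (x - a)) = fun ω => ch a ω * 𝓕 (u : ℝ → ℂ) ω :=
    fourier_shift _ a
  have h4 : (F u : ℝ → ℂ) =ᵐ[volume] 𝓕 (u : ℝ → ℂ) := hF u hu
  apply Lp.ext (μ := (volume : Measure ℝ))
  have h5 : (F (Tr a u) : ℝ → ℂ) =ᵐ[volume] fun ω => ch a ω * (F u : ℝ → ℂ) ω := by
    filter_upwards [h1, h4] with ω hω1 hω4
    rw [hω1, h2, h3, hω4]
  exact h5.trans (mulOp_coeFn a (F u)).symm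

/-- The Fourier transform carries translation to modulation, for all of `L²`. -/
lemma key_tr (F : L2 ≃ₗᵢ[ℂ] L2) (hF : IsFourierTransform F) (a : ℝ) (u : L2) :
    F (Tr a u) = mulOp a (F u) := by
  refine (Lp.simpleFunc.denseRange (E := ℂ) (μ := (volume : Measure ℝ))
      (p := 2) ENNReal.ofNat_ne_top).induction_on u ?_ ?_
  · exact isClosed_eq (F.continuous.comp (tr_continuous a))
      ((mulOp_isometry a).continuous.comp F.continuous)
  · intro s
    apply key_tr_of_integrable F hF a
    have hint : Integrable (Lp.simpleFunc.toSimpleFunc s : ℝ → ℂ) volume :=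
      (SimpleFunc.memLp_iff_integrable (p := 2) two_ne_zero
        ENNReal.ofNat_ne_top).mp (Lp.simpleFunc.memLp s)
    exact hint.congr (Lp.simpleFunc.toSimpleFunc_eq_toFun s)

lemma coeFn_finset_sum {ι : Type*} (s : Finset ι) (v : ι → L2) :
    ((∑ i ∈ s, v i : L2) : ℝ → ℂ) =ᵐ[volume] fun x => ∑ i ∈ s, (v i : ℝ → ℂ) x := by
  classical
  induction s using Finset.induction_on with
  | empty => simp only [Finset.sum_empty]; exact Lp.coeFn_zero ℂ 2 (volume : Measure ℝ)
  | insert i t hni ih =>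
    rw [Finset.sum_insert hni]
    filter_upwards [Lp.coeFn_add (v i) (∑ j ∈ t, v j), ih] with x hx1 hx2
    rw [hx1]
    simp only [Pi.add_apply, hx2, Finset.sum_insert hni]

lemma eLpNorm_two_eq {α : Type*} [MeasurableSpace α] (μ : Measure α) (h : α → ℂ) :
    eLpNorm h 2 μ = (∫⁻ x, ((‖h x‖₊ : ℝ≥0∞)) ^ (2:ℕ) ∂μ) ^ (1 / (2:ℝ)) := by
  rw [eLpNorm_eq_lintegral_rpow_enorm_toReal two_ne_zero ENNReal.ofNat_ne_top]
  have h2 : ((2:ℝ≥0∞)).toReal = ((2:ℕ):ℝ) := by simp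
  rw [h2]
  congr 1
  apply lintegral_congr; intro x; rw [ENNReal.rpow_natCast, enorm_eq_nnnorm]

lemma eLpNorm_mul_key (φ : ℝ → ℂ) (hφ : Measurable φ) (ψ : AddCircle (1:ℝ) → ℂ)
    (hψ : Measurable ψ) :
    haveI : Fact (0 < (1:ℝ)) := ⟨one_pos⟩
    eLpNorm ψ 2 ((volume.withDensity fun ω => (‖φ ω‖₊ : ℝ≥0∞) ^ (2:ℕ)).map
        ((↑) : ℝ → AddCircle (1:ℝ)))
      = eLpNorm (fun ω : ℝ => ψ ω * φ ω) 2 volume := by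
  haveI : Fact (0 < (1:ℝ)) := ⟨one_pos⟩
  rw [eLpNorm_map_measure hψ.aestronglyMeasurable AddCircle.measurable_mk'.aemeasurable]
  rw [eLpNorm_two_eq, eLpNorm_two_eq]
  congr 1
  rw [lintegral_withDensity_eq_lintegral_mul _ (hφ.nnnorm.coe_nnreal_ennreal.pow_const 2)
    ((hψ.comp AddCircle.measurable_mk').nnnorm.coe_nnreal_ennreal.pow_const 2)]
  apply lintegral_congr
  intro ω
  simp only [Pi.mul_apply, Function.comp_apply, nnnorm_mul, ENNReal.coe_mul, mul_pow]
  ring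

lemma ch_neg_int (n : ℤ) (ω : ℝ) :
    haveI : Fact (0 < (1:ℝ)) := ⟨one_pos⟩
    ch ((-n : ℤ) : ℝ) ω = fourier n (ω : AddCircle (1:ℝ)) := by
  haveI : Fact (0 < (1:ℝ)) := ⟨one_pos⟩
  rw [ch, fourier_coe_apply, Real.fourierChar_apply]
  congr 1
  push_cast
  ring

end Stmt6Aux

open Stmt6Aux

/-- If `m` is `ℤ`-periodic measurable with `m · f̂ ∈ L²`, then the function `g` with
`ĝ = m · f̂` belongs to `S(f)`. -/
theorem stmt6 (F : L2 ≃ₗᵢ[ℂ] L2) (hF : IsFourierTransform F)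
    (f : L2) (m : ℝ → ℂ) (hm : Measurable m)
    (hper : ∀ ω : ℝ, ∀ k : ℤ, m (ω + k) = m ω)
    (hL2 : MemLp (fun ω => m ω * (F f : ℝ → ℂ) ω) 2 volume)
    (g : L2) (hgdef : (F g : ℝ → ℂ) =ᵐ[volume] fun ω => m ω * (F f : ℝ → ℂ) ω) :
    g ∈ SIS f := by
  haveI : Fact (0 < (1:ℝ)) := ⟨one_pos⟩
  set φ : ℝ → ℂ := (F f : ℝ → ℂ) with hφdef
  have hφm : Measurable φ := (Lp.stronglyMeasurable (F f)).measurable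
  set ν : Measure (AddCircle (1:ℝ)) :=
    (volume.withDensity fun ω => (‖φ ω‖₊ : ℝ≥0∞) ^ (2:ℕ)).map ((↑) : ℝ → AddCircle (1:ℝ)) with hνdef
  -- the periodization of `m`
  have hper1 : Function.Periodic m 1 := fun x => by simpa using hper x 1
  set mbar : AddCircle (1:ℝ) → ℂ := hper1.lift with hmbardef
  have hmbar_mk : ∀ x : ℝ, mbar (x : AddCircle (1:ℝ)) = m x := fun x => hper1.lift_coe x
  have hx_eq : ∀ x : AddCircle (1:ℝ), x = (((AddCircle.equivIoc 1 0 x : Set.Ioc (0:ℝ) (0+1)) : ℝ)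
      : AddCircle (1:ℝ)) := by
    intro x
    conv_lhs => rw [← (AddCircle.equivIoc 1 0).symm_apply_apply x]
    rfl
  have hmbarm : Measurable mbar := by
    have h : mbar = fun x => m ((AddCircle.measurableEquivIoc 1 0 x : ℝ)) := by
      funext x
      conv_lhs => rw [hx_eq x]
      rw [hmbar_mk]
      rfl
    rw [h]
    exact hm.comp (measurable_subtype_coe.comp (AddCircle.measurableEquivIoc 1 0).measurable)
  -- finiteness of ν
  haveI : IsFiniteMeasure ν := by
    constructor
    rw [hνdef, Measure.map_apply AddCircle.measurable_mk' MeasurableSet.univ]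
    simp only [Set.preimage_univ]
    rw [withDensity_apply _ MeasurableSet.univ, setLIntegral_univ]
    have h := Lp.eLpNorm_lt_top (F f)
    rw [eLpNorm_two_eq] at h
    rw [← ENNReal.rpow_lt_top_iff_of_pos (y := (1/(2:ℝ))) (by norm_num)]
    exact h
  -- m̄ is in L²(ν)
  have hmul_eq : ∀ (ψ : AddCircle (1:ℝ) → ℂ), Measurable ψ →
      eLpNorm ψ 2 ν = eLpNorm (fun ω : ℝ => ψ ω * φ ω) 2 volume := by
    intro ψ hψ
    rw [hνdef]
    exact eLpNorm_mul_key φ hφm ψ hψ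
  have hmem : MemLp mbar 2 ν := by
    refine ⟨hmbarm.aestronglyMeasurable, ?_⟩
    rw [hmul_eq mbar hmbarm]
    have : (fun ω : ℝ => mbar (ω : AddCircle (1:ℝ)) * φ ω) = fun ω => m ω * φ ω := by
      funext ω; rw [hmbar_mk]
    rw [this]
    exact hL2.2
  set M : Lp ℂ 2 ν := hmem.toLp mbar with hMdef
  -- density of trigonometric polynomials in L²(ν)
  have hdense := (ContinuousMap.toLp_denseRange ℂ ν ℂ
    (ENNReal.ofNat_ne_top : (2:ℝ≥0∞) ≠ ∞)).topologicalClosure_map_submodule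
      span_fourier_closure_eq_top
  have hMmem := Submodule.eq_top_iff'.mp hdense M
  -- main approximation argument
  rw [SIS]
  rw [Metric.mem_closure_iff]
  intro ε hε
  obtain ⟨Q, hQmem, hQdist⟩ := Metric.mem_closure_iff.mp hMmem ε hε
  obtain ⟨P, hPspan, hPQ⟩ := Submodule.mem_map.mp hQmem
  have hPQ' : ContinuousMap.toLp (E := ℂ) 2 ν ℂ P = Q := hPQ
  obtain ⟨c, hc⟩ := Finsupp.mem_span_range_iff_exists_finsupp.mp hPspan
  -- the approximating element of the shift-invariant space
  refine ⟨∑ n ∈ c.support, c n • Tr ((-n : ℤ) : ℝ) f, ?_, ?_⟩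
  · apply Submodule.sum_mem
    intro n _
    exact Submodule.smul_mem _ _ (Submodule.subset_span ⟨-n, rfl⟩)
  · set b : L2 := ∑ n ∈ c.support, c n • Tr ((-n : ℤ) : ℝ) f with hbdef
    have hFb : F b = ∑ n ∈ c.support, c n • mulOp ((-n : ℤ) : ℝ) (F f) := by
      rw [hbdef, map_sum]
      congr 1
      funext n
      rw [_root_.map_smul, key_tr F hF]
    have hFb_coe : (F b : ℝ → ℂ) =ᵐ[volume] fun ω => (P (ω : AddCircle (1:ℝ))) * φ ω := by
      rw [hFb]
      have hterms : ∀ᵐ ω ∂(volume : Measure ℝ), ∀ n ∈ c.support,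
          ((c n • mulOp ((-n : ℤ) : ℝ) (F f) : L2) : ℝ → ℂ) ω
            = c n * (fourier n (ω : AddCircle (1:ℝ)) * φ ω) := by
        rw [Filter.eventually_all_finset]
        intro n _
        filter_upwards [Lp.coeFn_smul (c n) (mulOp ((-n : ℤ) : ℝ) (F f)),
          mulOp_coeFn ((-n : ℤ) : ℝ) (F f)] with ω h1 h2
        rw [h1, Pi.smul_apply, h2, smul_eq_mul, ch_neg_int]
      filter_upwards [coeFn_finset_sum c.support
        (fun n => c n • mulOp ((-n : ℤ) : ℝ) (F f)), hterms] with ω h1 h2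
      rw [h1]
      rw [Finset.sum_congr rfl h2]
      rw [← hc]
      rw [Finsupp.sum]
      simp only [ContinuousMap.coe_sum, ContinuousMap.coe_smul, Finset.sum_apply,
        Pi.smul_apply, smul_eq_mul, Finset.sum_mul]
      ring_nf
      exact Finset.sum_congr rfl fun x _ => by ring
    have hFg_coe : (F g : ℝ → ℂ) =ᵐ[volume] fun ω => mbar (ω : AddCircle (1:ℝ)) * φ ω := by
      filter_upwards [hgdef] with ω hω
      rw [hω, hmbar_mk]
    have hdiff : ((F g : ℝ → ℂ) - (F b : ℝ → ℂ)) =ᵐ[volume]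
        fun ω => (fun x => mbar x - P x) (ω : AddCircle (1:ℝ)) * φ ω := by
      filter_upwards [hFg_coe, hFb_coe] with ω h1 h2
      simp only [Pi.sub_apply, h1, h2]
      ring
    have hdist : dist g b = dist M Q := by
      rw [← F.dist_map g b, Lp.dist_def, Lp.dist_def]
      congr 1
      rw [eLpNorm_congr_ae hdiff,
        ← hmul_eq (fun x => mbar x - P x) (hmbarm.sub P.continuous.measurable)]
      apply eLpNorm_congr_ae
      filter_upwards [hmem.coeFn_toLp,
        (ContinuousMap.coeFn_toLp (p := 2) (𝕜 := ℂ) ν P :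
          ⇑(ContinuousMap.toLp (E := ℂ) 2 ν ℂ P) =ᵐ[ν] ⇑P)] with x h2 h3
      rw [Pi.sub_apply, h2, ← hPQ', h3]
    rw [hdist]
    exact hQdist
end
end

section
/- Let f ∈ L²(ℝ), n a positive integer, and S(f, (1/n)ℤ) the closed span of {T_{j/n} f : j ∈ ℤ}. If m is an nℤ-periodic measurable function with m·f̂ ∈ L²(ℝ), then the function g with ĝ = m·f̂ belongs to S(f, (1/n)ℤ). -/
open MeasureTheory FourierTransform

noncomputable section

/-- The `(1/n)ℤ` shift-invariant space generated by `f`: closed span of `{T_{j/n} f}`. -/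
def SISn (f : L2) (n : ℕ) : Set L2 :=
  closure (Submodule.span ℂ {g : L2 | ∃ j : ℤ, g = Tr ((j : ℝ) / n) f} : Set L2)

open Filter Set Function
open scoped ENNReal NNReal Topology

namespace Stmt7

def ch (a : ℝ) : ℝ → ℂ := fun ω => (Real.fourierChar (-(a * ω)) : ℂ)

lemma ch_norm (a ω : ℝ) : ‖ch a ω‖ = 1 := by simp [ch, Circle.norm_coe]

lemma continuous_ch (a : ℝ) : Continuous (ch a) := by
  unfold ch; fun_prop

lemma eLpNorm_ch_mul (a : ℝ) (g : ℝ → ℂ) :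
    eLpNorm (fun ω => ch a ω * g ω) 2 volume = eLpNorm g 2 volume :=
  eLpNorm_congr_norm_ae (Filter.Eventually.of_forall fun ω => by rw [norm_mul, ch_norm, one_mul])

lemma memLp_ch_mul (a : ℝ) (g : L2) : MemLp (fun ω => ch a ω * (g : ℝ → ℂ) ω) 2 volume :=
  ⟨((continuous_ch a).aestronglyMeasurable).mul (Lp.aestronglyMeasurable g),
   by rw [eLpNorm_ch_mul]; exact Lp.eLpNorm_lt_top g⟩

def mulCh (a : ℝ) (g : L2) : L2 := (memLp_ch_mul a g).toLp _

lemma coeFn_mulCh (a : ℝ) (g : L2) :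
    (mulCh a g : ℝ → ℂ) =ᵐ[volume] fun ω => ch a ω * (g : ℝ → ℂ) ω :=
  MemLp.coeFn_toLp _

lemma dist_mulCh (a : ℝ) (g₁ g₂ : L2) : dist (mulCh a g₁) (mulCh a g₂) = dist g₁ g₂ := by
  rw [Lp.dist_def, Lp.dist_def]
  congr 1
  have h : (⇑(mulCh a g₁) - ⇑(mulCh a g₂)) =ᵐ[volume]
      fun ω => ch a ω * ((g₁ : ℝ → ℂ) ω - (g₂ : ℝ → ℂ) ω) := by
    filter_upwards [coeFn_mulCh a g₁, coeFn_mulCh a g₂, Lp.coeFn_sub g₁ g₂] with ω h1 h2 h3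
    simp only [Pi.sub_apply, h1, h2, mul_sub]
  rw [eLpNorm_congr_ae h, eLpNorm_ch_mul a]
  rfl

lemma isometry_Tr (a : ℝ) : Isometry (Tr a) := by
  unfold Tr
  exact AddMonoidHomClass.isometry_of_norm _ fun u => Lp.norm_compMeasurePreserving u _

lemma dense_integrable : Dense {u : L2 | Integrable (u : ℝ → ℂ) volume} := by
  intro u
  rw [Metric.mem_closure_iff]
  intro ε hε
  have hε2 : (0:ℝ) < ε/2 := by positivity
  obtain ⟨q, hq_supp, hq_close, hq_cont, hq_mem⟩ :=
    (Lp.memLp u).exists_hasCompactSupport_eLpNorm_sub_le (show (2:ℝ≥0∞) ≠ ⊤ by norm_num)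
      (ε := ENNReal.ofReal (ε/2)) (ENNReal.ofReal_pos.mpr hε2).ne'
  refine ⟨hq_mem.toLp q, ?_, ?_⟩
  · exact (hq_cont.integrable_of_hasCompactSupport hq_supp).congr (hq_mem.coeFn_toLp).symm
  · rw [Lp.dist_def]
    have h : eLpNorm (⇑u - ⇑(hq_mem.toLp q)) 2 volume = eLpNorm (⇑u - q) 2 volume :=
      eLpNorm_congr_ae (by filter_upwards [hq_mem.coeFn_toLp] with x hx; simp [hx])
    rw [h]
    calc (eLpNorm (⇑u - q) 2 volume).toReal ≤ (ENNReal.ofReal (ε/2)).toReal :=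
          ENNReal.toReal_mono (by simp) hq_close
      _ = ε/2 := ENNReal.toReal_ofReal hε2.le
      _ < ε := by linarith

lemma fourierIntegral_congr_ae {u v : ℝ → ℂ} (h : u =ᵐ[volume] v) : 𝓕 u = 𝓕 v := by
  funext w
  rw [Real.fourier_eq, Real.fourier_eq]
  exact integral_congr_ae (by filter_upwards [h] with x hx; rw [hx])

lemma fourierIntegral_translate (u : ℝ → ℂ) (a : ℝ) :
    𝓕 (u ∘ (fun x => x - a)) = fun w => ch a w * 𝓕 u w := by
  have h1 : (u ∘ fun x => x - a) = u ∘ (fun x => x + (-a)) := by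
    funext x; simp [sub_eq_add_neg]
  rw [h1]
  have h2 := VectorFourier.fourierIntegral_comp_add_right Real.fourierChar
    (volume : Measure ℝ) (innerₗ ℝ) u (-a)
  funext w
  change VectorFourier.fourierIntegral Real.fourierChar volume (innerₗ ℝ) (u ∘ fun x => x + -a) w =
    ch a w * VectorFourier.fourierIntegral Real.fourierChar volume (innerₗ ℝ) u w
  rw [h2]
  dsimp only
  rw [Circle.smul_def]
  congr 1
  show (Real.fourierChar ((innerₗ ℝ) (-a) w) : ℂ) = ch a w
  unfold ch
  norm_num [RCLike.inner_apply]
  rw [mul_comm]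

lemma modulation (F : L2 ≃ₗᵢ[ℂ] L2) (hF : IsFourierTransform F) (a : ℝ) (f : L2) :
    F (Tr a f) = mulCh a (F f) := by
  have hcont1 : Continuous fun u : L2 => F (Tr a u) :=
    F.continuous.comp (isometry_Tr a).continuous
  have hcont2 : Continuous fun u : L2 => mulCh a (F u) :=
    ((Isometry.of_dist_eq (dist_mulCh a)).continuous).comp F.continuous
  have agree : EqOn (fun u : L2 => F (Tr a u)) (fun u : L2 => mulCh a (F u))
      {u : L2 | Integrable (u : ℝ → ℂ) volume} := by
    intro u hu
    simp only [Set.mem_setOf_eq] at hu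
    apply Lp.ext
    have h1 : ⇑(Tr a u) =ᵐ[volume] (⇑u) ∘ (fun x => x - a) :=
      Lp.coeFn_compMeasurePreserving u _
    have h2 : Integrable ((⇑u) ∘ fun x => x - a) volume :=
      ((measurePreserving_sub_right volume a).integrable_comp
        (Lp.aestronglyMeasurable u)).mpr hu
    have h3 : Integrable (⇑(Tr a u)) volume := h2.congr h1.symm
    have h4 := hF _ h3
    have h5 : 𝓕 (⇑(Tr a u)) = fun w => ch a w * 𝓕 (⇑u) w := by
      rw [fourierIntegral_congr_ae h1, fourierIntegral_translate]
    calc ⇑(F (Tr a u)) =ᵐ[volume] 𝓕 (⇑(Tr a u)) := h4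
      _ = fun w => ch a w * 𝓕 (⇑u) w := h5
      _ =ᵐ[volume] fun w => ch a w * (F u : ℝ → ℂ) w := by
          filter_upwards [hF u hu] with w hw; rw [hw]
      _ =ᵐ[volume] ⇑(mulCh a (F u)) := (coeFn_mulCh a (F u)).symm
  exact congrFun (Continuous.ext_on dense_integrable hcont1 hcont2 agree) f

lemma coeFn_finsetSum {ι : Type*} (s : Finset ι) (u : ι → L2) :
    ⇑(∑ i ∈ s, u i) =ᵐ[volume] fun ω => ∑ i ∈ s, (u i : ℝ → ℂ) ω := by
  classical
  induction s using Finset.induction_on with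
  | empty => simpa [Pi.zero_def] using Lp.coeFn_zero (E := ℂ) (p := 2) (μ := (volume : Measure ℝ))
  | @insert j s hj ih =>
    rw [Finset.sum_insert hj]
    filter_upwards [Lp.coeFn_add (u j) (∑ i ∈ s, u i), ih] with ω h1 h2
    rw [h1]
    simp only [Pi.add_apply, h2, Finset.sum_insert hj]

lemma coeFn_finsupp_sum_smul (c : ℤ →₀ ℂ) (u : ℤ → L2) (w : ℤ → ℝ → ℂ)
    (hu : ∀ j ∈ c.support, ⇑(u j) =ᵐ[volume] w j) :
    ⇑(c.sum fun j a => a • u j) =ᵐ[volume]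
      fun ω => ∑ j ∈ c.support, c j * w j ω := by
  rw [Finsupp.sum]
  have h2 : ∀ᵐ ω ∂(volume : Measure ℝ), ∀ j ∈ c.support, (⇑(c j • u j)) ω = c j * w j ω := by
    rw [Filter.eventually_all_finset]
    intro j hj
    filter_upwards [Lp.coeFn_smul (c j) (u j), hu j hj] with ω h hw
    rw [h]; simp [hw]
  filter_upwards [coeFn_finsetSum c.support (fun j => c j • u j), h2] with ω h1 h2
  rw [h1]; exact Finset.sum_congr rfl h2

lemma eLpNorm_two {α : Type*} [MeasurableSpace α] (ν : Measure α) (q : α → ℂ) :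
    eLpNorm q 2 ν = (∫⁻ x, (‖q x‖₊ : ℝ≥0∞) ^ (2:ℝ) ∂ν) ^ (1/2 : ℝ) := by
  rw [eLpNorm_eq_lintegral_rpow_enorm_toReal (by norm_num) (by norm_num)]
  norm_num
  rfl

end Stmt7

open Stmt7

/-- If `m` is `nℤ`-periodic measurable with `m · f̂ ∈ L²`, then the function `g` with
`ĝ = m · f̂` belongs to `S(f, (1/n)ℤ)`. -/
theorem stmt7 (F : L2 ≃ₗᵢ[ℂ] L2) (hF : IsFourierTransform F)
    (f : L2) (n : ℕ) (hn : 0 < n) (m : ℝ → ℂ) (hm : Measurable m)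
    (hper : ∀ ω : ℝ, ∀ k : ℤ, m (ω + n * k) = m ω)
    (hL2 : MemLp (fun ω => m ω * (F f : ℝ → ℂ) ω) 2 volume)
    (g : L2) (hgdef : (F g : ℝ → ℂ) =ᵐ[volume] fun ω => m ω * (F f : ℝ → ℂ) ω) :
    g ∈ SISn f n := by

  classical
  have hn' : (0:ℝ) < (n:ℝ) := by exact_mod_cast hn
  haveI hTfact : Fact (0 < (n:ℝ)) := ⟨hn'⟩
  set T : ℝ := (n : ℝ) with hT
  set φ : ℝ → ℂ := (F f : ℝ → ℂ) with hφ
  have hφm : AEStronglyMeasurable φ volume := Lp.aestronglyMeasurable (F f)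
  set d : ℝ → ℝ≥0∞ := fun ω => (‖φ ω‖₊ : ℝ≥0∞) ^ (2:ℝ) with hd_def
  have hrpowm : Measurable fun x : ℝ≥0∞ => x ^ (2:ℝ) :=
    (ENNReal.continuous_rpow_const).measurable
  have hd : AEMeasurable d volume := hrpowm.comp_aemeasurable hφm.enorm
  -- finiteness of ∫ d
  have hfin_of_L2 : ∀ (q : ℝ → ℂ), MemLp q 2 volume →
      ∫⁻ ω, (‖q ω‖₊ : ℝ≥0∞) ^ (2:ℝ) ∂volume < ⊤ := by
    intro q hq
    have h := hq.eLpNorm_lt_top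
    rw [eLpNorm_two] at h
    by_contra hcon
    rw [not_lt, top_le_iff] at hcon
    rw [hcon, ENNReal.top_rpow_of_pos (by norm_num)] at h
    exact (lt_irrefl _ h).elim
  have hφ_int : ∫⁻ ω, d ω ∂volume < ⊤ := hfin_of_L2 φ (Lp.memLp (F f))
  set mk' : ℝ → AddCircle T := ((↑) : ℝ → AddCircle T) with hmk'
  have hmk : Measurable mk' := AddCircle.measurable_mk'
  set μ : Measure (AddCircle T) := (volume.withDensity d).map mk' with hμ
  haveI : IsFiniteMeasure μ := by
    constructor
    rw [hμ, Measure.map_apply hmk MeasurableSet.univ, Set.preimage_univ,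
      withDensity_apply _ MeasurableSet.univ, setLIntegral_univ]
    exact hφ_int
  -- transfer lemma
  have transfer : ∀ Q : AddCircle T → ℂ, Measurable Q →
      eLpNorm (fun ω => Q (mk' ω) * φ ω) 2 volume = eLpNorm Q 2 μ := by
    intro Q hQ
    rw [eLpNorm_two, eLpNorm_two]
    congr 1
    have hQn : Measurable fun x => (‖Q x‖₊ : ℝ≥0∞) ^ (2:ℝ) := hrpowm.comp hQ.enorm
    rw [hμ, lintegral_map hQn hmk,
      lintegral_withDensity_eq_lintegral_mul₀ (g := fun a => (‖Q (mk' a)‖₊ : ℝ≥0∞) ^ (2:ℝ))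
        hd (hQn.comp hmk).aemeasurable]
    refine lintegral_congr fun ω => ?_
    simp only [Pi.mul_apply, hd_def]
    rw [nnnorm_mul, ENNReal.coe_mul, ENNReal.mul_rpow_of_nonneg _ _ (by norm_num : (0:ℝ) ≤ 2),
      mul_comm]
  -- truncations
  set mt : ℕ → ℝ → ℂ := fun N ω => if ‖m ω‖ ≤ (N:ℝ) then m ω else 0 with hmt
  have hmt_meas : ∀ N, Measurable (mt N) := fun N =>
    Measurable.ite (measurableSet_le hm.norm measurable_const) hm measurable_const
  have hmt_per : ∀ N, (mt N).Periodic T := by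
    intro N ω
    have h1 : m (ω + T) = m ω := by simpa using hper ω 1
    simp only [hmt, h1]
  have hmt_bd : ∀ N ω, ‖mt N ω‖ ≤ (N:ℝ) := by
    intro N ω
    simp only [hmt]
    by_cases h : ‖m ω‖ ≤ (N:ℝ)
    · rw [if_pos h]; exact h
    · rw [if_neg h]; simp
  -- dominated convergence for the truncation error
  set G : ℕ → ℝ → ℝ≥0∞ := fun N ω => (‖(m ω - mt N ω) * φ ω‖₊ : ℝ≥0∞) ^ (2:ℝ) with hG
  have hGmeas : ∀ N, AEMeasurable (G N) volume :=
    fun N => hrpowm.comp_aemeasurable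
      (((hm.sub (hmt_meas N)).aestronglyMeasurable.mul hφm).enorm)
  have hGle : ∀ N, G N ≤ᵐ[volume] fun ω => (‖m ω * φ ω‖₊ : ℝ≥0∞) ^ (2:ℝ) := by
    intro N
    refine Eventually.of_forall fun ω => ?_
    refine ENNReal.rpow_le_rpow ?_ (by norm_num)
    rw [ENNReal.coe_le_coe]
    simp only [hmt]
    by_cases h : ‖m ω‖ ≤ (N:ℝ)
    · rw [if_pos h]; simp
    · rw [if_neg h]; simp
  have hbound_int : ∫⁻ ω, (‖m ω * φ ω‖₊ : ℝ≥0∞) ^ (2:ℝ) ∂volume ≠ ⊤ :=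
    (hfin_of_L2 _ hL2).ne
  have hGtend : ∀ᵐ ω ∂(volume : Measure ℝ),
      Tendsto (fun N => G N ω) atTop (𝓝 ((fun _ => (0:ℝ≥0∞)) ω)) := by
    refine Eventually.of_forall fun ω => ?_
    refine tendsto_atTop_of_eventually_const (i₀ := ⌈‖m ω‖⌉₊) fun N hN => ?_
    have h : ‖m ω‖ ≤ (N:ℝ) := le_trans (Nat.le_ceil _) (by exact_mod_cast hN)
    simp only [hG, hmt]
    rw [if_pos h]
    simp [ENNReal.zero_rpow_of_pos (by norm_num : (0:ℝ) < 2)]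
  have htend : Tendsto (fun N => ∫⁻ ω, G N ω ∂volume) atTop (𝓝 0) := by
    have := tendsto_lintegral_of_dominated_convergence' _ hGmeas hGle hbound_int hGtend
    simpa using this
  have htend2 : Tendsto (fun N => eLpNorm (fun ω => (m ω - mt N ω) * φ ω) 2 volume)
      atTop (𝓝 0) := by
    have hcont : Continuous fun x : ℝ≥0∞ => x ^ (1/2 : ℝ) := ENNReal.continuous_rpow_const
    have h := (hcont.tendsto 0).comp htend
    have h0 : (0:ℝ≥0∞) ^ (1/2:ℝ) = 0 := ENNReal.zero_rpow_of_pos (by norm_num)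
    simp only [Function.comp_def, h0] at h
    convert h using 2 with N
    rw [eLpNorm_two]
  -- membership via metric closure
  rw [SISn, Metric.mem_closure_iff]
  intro ε hε
  have hε4 : (0:ℝ) < ε/4 := by positivity
  have hε4' : (0:ℝ≥0∞) < ENNReal.ofReal (ε/4) := ENNReal.ofReal_pos.mpr hε4
  -- choose N
  obtain ⟨N, hN⟩ := (htend2.eventually_lt_const hε4').exists
  -- lift of the truncation to the circle
  set M : AddCircle T → ℂ := (hmt_per N).lift with hM
  have hM_mk : ∀ ω : ℝ, M (mk' ω) = mt N ω := fun ω => rfl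
  have hM_meas : Measurable M := by
    have heq : M = (fun y : Ioc (0:ℝ) (0 + T) => mt N (y:ℝ)) ∘ (AddCircle.measurableEquivIoc T 0) := by
      funext x
      have hx : ((((AddCircle.equivIoc T 0) x : Ioc (0:ℝ) (0+T)) : ℝ) : AddCircle T) = x :=
        (AddCircle.equivIoc T 0).symm_apply_apply x
      calc M x = M ((((AddCircle.equivIoc T 0) x : Ioc (0:ℝ) (0+T)) : ℝ) : AddCircle T) := by rw [hx]
        _ = mt N (((AddCircle.equivIoc T 0) x : Ioc (0:ℝ) (0+T)) : ℝ) := rfl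
    rw [heq]
    exact ((hmt_meas N).comp measurable_subtype_coe).comp
      (AddCircle.measurableEquivIoc T 0).measurable
  have hM_L2 : MemLp M 2 μ := by
    refine MemLp.of_bound hM_meas.aestronglyMeasurable (N:ℝ) (Eventually.of_forall fun x => ?_)
    induction x using QuotientAddGroup.induction_on with
    | H ω => exact hmt_bd N ω
  -- continuous approximation
  obtain ⟨ψ, hψ_close, hψ_mem⟩ := hM_L2.exists_boundedContinuous_eLpNorm_sub_le
    (show (2:ℝ≥0∞) ≠ ⊤ by norm_num) (ε := ENNReal.ofReal (ε/4)) hε4'.ne'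
  -- Stone-Weierstrass
  set K : ℝ≥0∞ := μ Set.univ ^ (2:ℝ≥0∞).toReal⁻¹ with hK
  have hK_fin : K < ⊤ :=
    ENNReal.rpow_lt_top_of_nonneg (by norm_num) (measure_ne_top μ _)
  set δ : ℝ := (ε/4) / (K.toReal + 1) with hδ
  have hδpos : 0 < δ := by
    have : (0:ℝ) ≤ K.toReal := ENNReal.toReal_nonneg
    positivity
  have hKδ : K * ENNReal.ofReal δ ≤ ENNReal.ofReal (ε/4) := by
    have h1 : K ≤ ENNReal.ofReal (K.toReal + 1) := by
      nth_rewrite 1 [← ENNReal.ofReal_toReal hK_fin.ne]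
      exact ENNReal.ofReal_le_ofReal (by linarith)
    calc K * ENNReal.ofReal δ ≤ ENNReal.ofReal (K.toReal + 1) * ENNReal.ofReal δ := by
          exact mul_le_mul_left h1 _
      _ = ENNReal.ofReal ((K.toReal + 1) * δ) := by
          rw [ENNReal.ofReal_mul (by linarith [ENNReal.toReal_nonneg (a := K)])]
      _ = ENNReal.ofReal (ε/4) := by
          congr 1
          rw [hδ]
          field_simp
  have hSW : (ψ.toContinuousMap : C(AddCircle T, ℂ)) ∈
      closure ((Submodule.span ℂ (Set.range (@fourier T))) : Set C(AddCircle T, ℂ)) := by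
    have h := span_fourier_closure_eq_top (T := T)
    have h2 : (ψ.toContinuousMap : C(AddCircle T, ℂ)) ∈
        (Submodule.span ℂ (Set.range (@fourier T))).topologicalClosure := by
      rw [h]; trivial
    rwa [← Submodule.topologicalClosure_coe]
  rw [Metric.mem_closure_iff] at hSW
  obtain ⟨P, hP_mem, hP_close⟩ := hSW δ hδpos
  have hψP : eLpNorm ((⇑ψ : AddCircle T → ℂ) - ⇑P) 2 μ ≤ ENNReal.ofReal (ε/4) := by
    refine le_trans (eLpNorm_le_of_ae_bound (C := δ) (Eventually.of_forall fun x => ?_)) ?_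
    · calc ‖ψ x - P x‖ = dist (ψ.toContinuousMap x) (P x) := by rw [dist_eq_norm]; rfl
        _ ≤ dist ψ.toContinuousMap P := ContinuousMap.dist_apply_le_dist x
        _ ≤ δ := hP_close.le
    · exact hKδ
  -- decompose P as a trig polynomial
  obtain ⟨c, hc⟩ := Finsupp.mem_span_range_iff_exists_finsupp.mp hP_mem
  set v : L2 := c.sum fun j a => a • Tr (((-j : ℤ) : ℝ)/(n:ℝ)) f with hv
  have hv_mem : v ∈ (Submodule.span ℂ {w : L2 | ∃ j : ℤ, w = Tr ((j:ℝ)/(n:ℝ)) f} : Submodule ℂ L2) := by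
    rw [hv, Finsupp.sum]
    refine Submodule.sum_mem _ fun j _ => Submodule.smul_mem _ _ (Submodule.subset_span ?_)
    exact ⟨-j, rfl⟩
  refine ⟨v, hv_mem, ?_⟩
  -- identify the representative of F v
  have hch_fourier : ∀ (j : ℤ) (ω : ℝ),
      ch (((-j : ℤ) : ℝ)/(n:ℝ)) ω = (fourier j (mk' ω) : ℂ) := by
    intro j ω
    have h2 : (fourier j ((ω : ℝ) : AddCircle T) : ℂ) =
        Complex.exp (2 * Real.pi * Complex.I * j * ω / T) := fourier_coe_apply
    rw [show mk' ω = ((ω : ℝ) : AddCircle T) from rfl, h2]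
    show (Real.fourierChar (-((((-j : ℤ) : ℝ)/(n:ℝ)) * ω)) : ℂ) = _
    rw [Real.fourierChar_apply]
    congr 1
    rw [hT]
    push_cast
    have hn0 : (n:ℂ) ≠ 0 := by exact_mod_cast hn.ne'
    field_simp
  have hFv_coe : ⇑(F v) =ᵐ[volume] fun ω => (P (mk' ω)) * φ ω := by
    have hFv : F v = c.sum fun j a => a • mulCh (((-j : ℤ) : ℝ)/(n:ℝ)) (F f) := by
      rw [hv, Finsupp.sum, Finsupp.sum, map_sum]
      exact Finset.sum_congr rfl fun j _ => by
        rw [LinearIsometryEquiv.map_smul, modulation F hF]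
    rw [hFv]
    have h1 := coeFn_finsupp_sum_smul c (fun j => mulCh (((-j : ℤ) : ℝ)/(n:ℝ)) (F f))
      (fun j ω => (fourier j (mk' ω) : ℂ) * φ ω)
      (fun j _ => by
        filter_upwards [coeFn_mulCh (((-j : ℤ) : ℝ)/(n:ℝ)) (F f)] with ω h
        rw [h, hch_fourier j ω])
    filter_upwards [h1] with ω h
    rw [h, ← hc]
    have : ((c.sum fun i a => a • fourier i : C(AddCircle T, ℂ))) (mk' ω) =
        ∑ j ∈ c.support, c j * (fourier j (mk' ω) : ℂ) := by
      rw [Finsupp.sum]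
      rw [ContinuousMap.coe_sum]
      rw [Finset.sum_apply]
      exact Finset.sum_congr rfl fun j _ => rfl
    rw [this, Finset.sum_mul]
    exact Finset.sum_congr rfl fun j _ => by ring
  -- final estimate
  have hd1 : dist g v = dist (F g) (F v) := (F.dist_map g v).symm
  rw [hd1, Lp.dist_def]
  have hsm1 : AEStronglyMeasurable (fun ω => (m ω - mt N ω) * φ ω) volume :=
    (hm.sub (hmt_meas N)).aestronglyMeasurable.mul hφm
  have hsm2 : AEStronglyMeasurable (fun ω => (mt N ω - P (mk' ω)) * φ ω) volume :=
    ((hmt_meas N).sub (P.continuous.measurable.comp hmk)).aestronglyMeasurable.mul hφm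
  have hcongr : eLpNorm (⇑(F g) - ⇑(F v)) 2 volume =
      eLpNorm ((fun ω => (m ω - mt N ω) * φ ω) + (fun ω => (mt N ω - P (mk' ω)) * φ ω)) 2 volume := by
    refine eLpNorm_congr_ae ?_
    filter_upwards [hgdef, hFv_coe] with ω h1 h2
    simp only [Pi.sub_apply, Pi.add_apply]
    rw [h1, h2]
    ring
  have hterm2 : eLpNorm (fun ω => (mt N ω - P (mk' ω)) * φ ω) 2 volume ≤
      ENNReal.ofReal (ε/4) + ENNReal.ofReal (ε/4) := by
    have hQmeas : Measurable (fun x => M x - P x) := hM_meas.sub P.continuous.measurable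
    have heq : (fun ω => (mt N ω - P (mk' ω)) * φ ω) =
        fun ω => (fun x => M x - P x) (mk' ω) * φ ω := by
      funext ω; rw [← hM_mk ω]
    rw [heq, transfer _ hQmeas]
    have hsplit : (fun x => M x - P x) = (M - ⇑ψ) + (⇑ψ - ⇑P) := by
      funext x; simp only [Pi.add_apply, Pi.sub_apply]; ring
    rw [hsplit]
    refine le_trans (eLpNorm_add_le (hM_meas.aestronglyMeasurable.sub
      ψ.continuous.measurable.aestronglyMeasurable)
      (ψ.continuous.measurable.aestronglyMeasurable.sub
        P.continuous.measurable.aestronglyMeasurable) (by norm_num : (1:ℝ≥0∞) ≤ 2)) ?_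
    exact add_le_add hψ_close hψP
  have htotal : eLpNorm (⇑(F g) - ⇑(F v)) 2 volume ≤ ENNReal.ofReal (3*(ε/4)) := by
    rw [hcongr]
    refine le_trans (eLpNorm_add_le hsm1 hsm2 (by norm_num : (1:ℝ≥0∞) ≤ 2)) ?_
    calc eLpNorm (fun ω => (m ω - mt N ω) * φ ω) 2 volume +
          eLpNorm (fun ω => (mt N ω - P (mk' ω)) * φ ω) 2 volume
        ≤ ENNReal.ofReal (ε/4) + (ENNReal.ofReal (ε/4) + ENNReal.ofReal (ε/4)) :=
          add_le_add hN.le hterm2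
      _ = ENNReal.ofReal (3*(ε/4)) := by
          rw [← ENNReal.ofReal_add hε4.le hε4.le, ← ENNReal.ofReal_add hε4.le (by linarith)]
          congr 1; ring
  have := ENNReal.toReal_le_of_le_ofReal (by linarith) htotal
  calc (eLpNorm (⇑(F g) - ⇑(F v)) 2 volume).toReal ≤ 3*(ε/4) := this
    _ < ε := by linarith
end
end

section
/- Fix a positive integer n and for k = 0,…,n−1 set B_k = ⋃_{j∈ℤ} ([k, k+1) + nj). Let S be a shift-invariant subspace of L²(ℝ) and U_k = {f ∈ L²(ℝ) : f̂ = ĝ·χ_{B_k} for some g ∈ S}. If U_k ⊆ S, then U_k is a closed subspace of L²(ℝ) that is invariant under translations by (1/n)ℤ (and in particular under ℤ). -/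
open MeasureTheory FourierTransform

noncomputable section

/-- `B_k = ⋃_{j ∈ ℤ} ([k, k+1) + n j)`. -/
def Bset (n k : ℕ) : Set ℝ := {ω : ℝ | ∃ j : ℤ, ω - n * j ∈ Set.Ico (k : ℝ) ((k : ℝ) + 1)}

/-- `U_k = {f ∈ L² : f̂ = ĝ · χ_{B_k} for some g ∈ S}`. -/
def Uspace (F : L2 ≃ₗᵢ[ℂ] L2) (S : Set L2) (n k : ℕ) : Set L2 :=
  {f : L2 | ∃ g ∈ S, (F f : ℝ → ℂ) =ᵐ[volume] (Bset n k).indicator (F g : ℝ → ℂ)}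

namespace Stmt8aux

open Complex Real Filter Topology Set Function
open scoped ENNReal NNReal

lemma Bset_eq (n k : ℕ) : Bset n k = ⋃ j : ℤ, Set.Ico ((k:ℝ) + n*j) ((k:ℝ)+1+n*j) := by
  ext ω
  simp only [Bset, Set.mem_setOf_eq, Set.mem_iUnion, Set.mem_Ico]
  constructor <;> rintro ⟨j, h1, h2⟩ <;> exact ⟨j, by linarith, by linarith⟩

lemma measurableSet_Bset (n k : ℕ) : MeasurableSet (Bset n k) := by
  rw [Bset_eq]; exact MeasurableSet.iUnion fun j => measurableSet_Ico

open Classical in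
def mul2 (w : ℝ → ℂ) (h : L2) : L2 :=
  if H : MemLp (fun x => w x * (h : ℝ → ℂ) x) 2 volume then H.toLp _ else 0

lemma memℒp_mul {w : ℝ → ℂ} (hw : AEStronglyMeasurable w volume) {C : ℝ}
    (hb : ∀ x, ‖w x‖ ≤ C) (h : L2) : MemLp (fun x => w x * (h : ℝ → ℂ) x) 2 volume :=
  MemLp.of_le_mul (Lp.memLp h) (hw.mul (Lp.aestronglyMeasurable h))
    (Filter.Eventually.of_forall fun x => by
      rw [norm_mul]; exact mul_le_mul_of_nonneg_right (hb x) (norm_nonneg _))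

lemma mul2_coe {w : ℝ → ℂ} (hw : AEStronglyMeasurable w volume) {C : ℝ}
    (hb : ∀ x, ‖w x‖ ≤ C) (h : L2) :
    (mul2 w h : ℝ → ℂ) =ᵐ[volume] fun x => w x * (h : ℝ → ℂ) x := by
  rw [mul2, dif_pos (memℒp_mul hw hb h)]; exact MemLp.coeFn_toLp _

lemma eLpNorm_coe_sub (h₁ h₂ : L2) :
    eLpNorm (⇑h₁ - ⇑h₂ : ℝ → ℂ) 2 volume ≠ ⊤ := by
  rw [← eLpNorm_congr_ae (Lp.coeFn_sub h₁ h₂)]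
  exact Lp.eLpNorm_ne_top _

lemma mul2_lip {w : ℝ → ℂ} (hw : AEStronglyMeasurable w volume)
    (hb : ∀ x, ‖w x‖ ≤ 1) (h₁ h₂ : L2) :
    dist (mul2 w h₁) (mul2 w h₂) ≤ dist h₁ h₂ := by
  rw [Lp.dist_def, Lp.dist_def]
  have h1 : (⇑(mul2 w h₁) - ⇑(mul2 w h₂) : ℝ → ℂ)
      =ᵐ[volume] fun x => w x * ((h₁ : ℝ → ℂ) x - (h₂ : ℝ → ℂ) x) := by
    filter_upwards [mul2_coe hw hb h₁, mul2_coe hw hb h₂] with x a b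
    simp only [Pi.sub_apply, a, b]; ring
  rw [eLpNorm_congr_ae h1]
  have h2 : eLpNorm (fun x => w x * ((h₁ : ℝ → ℂ) x - (h₂ : ℝ → ℂ) x)) 2 volume
      ≤ eLpNorm (⇑h₁ - ⇑h₂ : ℝ → ℂ) 2 volume := by
    apply eLpNorm_mono_ae
    apply Filter.Eventually.of_forall
    intro x
    rw [norm_mul, Pi.sub_apply]
    calc ‖w x‖ * ‖(h₁ : ℝ → ℂ) x - (h₂ : ℝ → ℂ) x‖
        ≤ 1 * ‖(h₁ : ℝ → ℂ) x - (h₂ : ℝ → ℂ) x‖ :=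
          mul_le_mul_of_nonneg_right (hb x) (norm_nonneg _)
      _ = ‖(h₁ : ℝ → ℂ) x - (h₂ : ℝ → ℂ) x‖ := one_mul _
  exact ENNReal.toReal_mono (eLpNorm_coe_sub h₁ h₂) h2

/-- the modulation multiplier -/
def eA (a : ℝ) : ℝ → ℂ := fun ω => Complex.exp ((2 * π * (-a * ω) : ℝ) * Complex.I)

lemma eA_norm (a ω : ℝ) : ‖eA a ω‖ = 1 := Complex.norm_exp_ofReal_mul_I _

lemma eA_cont (a : ℝ) : Continuous (eA a) := by
  apply Complex.continuous_exp.comp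
  continuity

lemma dense_integrable : Dense {f : L2 | Integrable (f : ℝ → ℂ) volume} := by
  rw [Metric.dense_iff]
  intro f r hr
  obtain ⟨g, hg_supp, hg_norm, hg_cont, hg_mem⟩ :=
    (Lp.memLp f).exists_hasCompactSupport_eLpNorm_sub_le (p := 2) (by norm_num)
      (ε := ENNReal.ofReal (r/2)) (by simp [hr, ne_of_gt])
  refine ⟨hg_mem.toLp g, ?_, ?_⟩
  · rw [Metric.mem_ball, Lp.dist_def]
    have h1 : (⇑(hg_mem.toLp g) - ⇑f : ℝ → ℂ) =ᵐ[volume] fun x => g x - (f : ℝ → ℂ) x := by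
      filter_upwards [hg_mem.coeFn_toLp] with x hx
      simp [hx]
    rw [eLpNorm_congr_ae h1]
    have h2 : eLpNorm (fun x => g x - (f : ℝ → ℂ) x) 2 volume ≤ ENNReal.ofReal (r/2) := by
      rw [show (fun x => g x - (f : ℝ → ℂ) x) = -((⇑f : ℝ → ℂ) - g) by funext x; simp]
      rw [eLpNorm_neg]
      exact hg_norm
    calc (eLpNorm (fun x => g x - (f : ℝ → ℂ) x) 2 volume).toReal
        ≤ (ENNReal.ofReal (r/2)).toReal := ENNReal.toReal_mono ENNReal.ofReal_ne_top h2
      _ = r/2 := ENNReal.toReal_ofReal (by linarith)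
      _ < r := by linarith
  · exact (hg_cont.integrable_of_hasCompactSupport hg_supp).congr hg_mem.coeFn_toLp.symm

lemma F_Tr (F : L2 ≃ₗᵢ[ℂ] L2) (hF : IsFourierTransform F) (a : ℝ) (f : L2) :
    F (Tr a f) = mul2 (eA a) (F f) := by
  have hb : ∀ x, ‖eA a x‖ ≤ 1 := fun x => le_of_eq (eA_norm a x)
  have hwm : AEStronglyMeasurable (eA a) volume := (eA_cont a).aestronglyMeasurable
  -- the two sides as continuous functions of f
  have hcont1 : Continuous fun f : L2 => F (Tr a f) := by
    have : Isometry (Tr a) :=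
      Lp.isometry_compMeasurePreserving (measurePreserving_sub_right volume a)
    exact F.continuous.comp this.continuous
  have hcont2 : Continuous fun f : L2 => mul2 (eA a) (F f) := by
    have hlip : LipschitzWith 1 (fun h : L2 => mul2 (eA a) h) :=
      LipschitzWith.of_dist_le_mul (fun h₁ h₂ => by
        rw [NNReal.coe_one, one_mul]; exact mul2_lip hwm hb h₁ h₂)
    exact hlip.continuous.comp F.continuous
  have hE : IsClosed {f : L2 | F (Tr a f) = mul2 (eA a) (F f)} :=
    isClosed_eq hcont1 hcont2
  have key : ∀ f : L2, Integrable (f : ℝ → ℂ) volume → F (Tr a f) = mul2 (eA a) (F f) := by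
    intro f hfi
    apply Lp.ext
    have h0 : (⇑(Tr a f) : ℝ → ℂ) =ᵐ[volume] fun x => (f : ℝ → ℂ) (x - a) :=
      Lp.coeFn_compMeasurePreserving f (measurePreserving_sub_right volume a)
    have hTi : Integrable (fun x => (f : ℝ → ℂ) (x - a)) volume :=
      ((measurePreserving_sub_right volume a).integrable_comp
        (Lp.aestronglyMeasurable f)).2 hfi
    have h1 : Integrable (⇑(Tr a f) : ℝ → ℂ) volume := hTi.congr h0.symm
    have h2 := hF _ h1
    have h3 : 𝓕 (⇑(Tr a f) : ℝ → ℂ) = 𝓕 (fun x => (f : ℝ → ℂ) (x - a)) := by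
      funext w
      exact integral_congr_ae (by filter_upwards [h0] with x hx; rw [hx])
    have h4 : 𝓕 (fun x => (f : ℝ → ℂ) (x - a)) = fun w => 𝐞 (-a * w) • 𝓕 (⇑f : ℝ → ℂ) w := by
      have h5 := VectorFourier.fourierIntegral_comp_add_right (𝕜 := ℝ) 𝐞 volume
        (innerₗ ℝ) (⇑f : ℝ → ℂ) (-a)
      have h6 : ((⇑f : ℝ → ℂ) ∘ fun v => v + -a) = fun x => (f : ℝ → ℂ) (x - a) := by
        funext x; simp [sub_eq_add_neg]
      rw [h6] at h5
      have h7 : ∀ w : ℝ, (innerₗ ℝ) (-a) w = -a * w := by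
        intro w; simp [RCLike.inner_apply, starRingEnd_apply]; ring
      calc 𝓕 (fun x => (f : ℝ → ℂ) (x - a)) = fun w => 𝐞 ((innerₗ ℝ) (-a) w) • 𝓕 (⇑f : ℝ → ℂ) w := h5
        _ = fun w => 𝐞 (-a * w) • 𝓕 (⇑f : ℝ → ℂ) w := by funext w; rw [h7]
    have h5 := hF f hfi
    have h8 := mul2_coe hwm hb (F f)
    calc (⇑(F (Tr a f)) : ℝ → ℂ)
        =ᵐ[volume] 𝓕 (⇑(Tr a f) : ℝ → ℂ) := h2
      _ = fun w => 𝐞 (-a * w) • 𝓕 (⇑f : ℝ → ℂ) w := by rw [h3, h4]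
      _ =ᵐ[volume] fun w => eA a w * (F f : ℝ → ℂ) w := by
          filter_upwards [h5] with w hw
          rw [← hw, Circle.smul_def, Real.fourierChar_apply]
          rfl
      _ =ᵐ[volume] (⇑(mul2 (eA a) (F f)) : ℝ → ℂ) := h8.symm
  have : ({f : L2 | Integrable (f : ℝ → ℂ) volume} : Set L2) ⊆
      {f : L2 | F (Tr a f) = mul2 (eA a) (F f)} := key
  have hd := dense_integrable
  have : (Set.univ : Set L2) ⊆ {f : L2 | F (Tr a f) = mul2 (eA a) (F f)} := by
    rw [← hd.closure_eq]
    calc closure {f : L2 | Integrable (f : ℝ → ℂ) volume}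
        ⊆ closure {f : L2 | F (Tr a f) = mul2 (eA a) (F f)} := closure_mono this
      _ = _ := hE.closure_eq
  exact this (Set.mem_univ f)

section Vpart

variable (F : L2 ≃ₗᵢ[ℂ] L2) (n k : ℕ)

/-- elements with Fourier support in `Bset n k` -/
def V0 : Set L2 := {h : L2 | (h : ℝ → ℂ) =ᵐ[volume] (Bset n k).indicator (h : ℝ → ℂ)}

lemma indicator_eLpNorm_le (u : ℝ → ℂ) (s : Set ℝ) :
    eLpNorm (s.indicator u) 2 volume ≤ eLpNorm u 2 volume :=
  eLpNorm_mono_ae (Filter.Eventually.of_forall fun x => by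
    by_cases hmem : x ∈ s
    · rw [Set.indicator_of_mem hmem]
    · rw [Set.indicator_of_notMem hmem, norm_zero]; exact norm_nonneg _)

lemma isClosed_V0 : IsClosed (V0 n k) := by
  apply IsSeqClosed.isClosed
  intro x p hx hlim
  have key : eLpNorm ((Bset n k)ᶜ.indicator (p : ℝ → ℂ)) 2 volume = 0 := by
    have hle : ∀ m : ℕ, eLpNorm ((Bset n k)ᶜ.indicator (p : ℝ → ℂ)) 2 volume
        ≤ eLpNorm (⇑p - ⇑(x m) : ℝ → ℂ) 2 volume := by
      intro m
      have h1 : ((Bset n k)ᶜ.indicator (⇑(x m) : ℝ → ℂ)) =ᵐ[volume] 0 := by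
        filter_upwards [hx m] with t ht
        by_cases hmem : t ∈ (Bset n k)ᶜ
        · rw [Set.indicator_of_mem hmem, ht, Set.indicator_of_notMem (by simpa using hmem)]
          rfl
        · rw [Set.indicator_of_notMem hmem]; rfl
      have h2 : ((Bset n k)ᶜ.indicator (⇑p : ℝ → ℂ)) =ᵐ[volume]
          ((Bset n k)ᶜ.indicator (⇑p - ⇑(x m) : ℝ → ℂ)) := by
        filter_upwards [h1] with t ht
        by_cases hmem : t ∈ (Bset n k)ᶜ
        · rw [Set.indicator_of_mem hmem, Set.indicator_of_mem hmem]
          have : ((Bset n k)ᶜ.indicator (⇑(x m) : ℝ → ℂ)) t = 0 := ht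
          rw [Set.indicator_of_mem hmem] at this
          simp [Pi.sub_apply, this]
        · rw [Set.indicator_of_notMem hmem, Set.indicator_of_notMem hmem]
      rw [eLpNorm_congr_ae h2]
      exact indicator_eLpNorm_le _ _
    have htend : Filter.Tendsto (fun m => eLpNorm (⇑p - ⇑(x m) : ℝ → ℂ) 2 volume)
        Filter.atTop (nhds 0) := by
      have : ∀ m, eLpNorm (⇑p - ⇑(x m) : ℝ → ℂ) 2 volume = ENNReal.ofReal (dist p (x m)) := by
        intro m
        rw [Lp.dist_def, ENNReal.ofReal_toReal (eLpNorm_coe_sub p (x m))]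
      simp_rw [this]
      have hd : Filter.Tendsto (fun m => dist p (x m)) Filter.atTop (nhds 0) := by
        have := (tendsto_iff_dist_tendsto_zero).1 hlim
        simpa [dist_comm] using this
      have := (ENNReal.continuous_ofReal.tendsto 0).comp hd
      rw [ENNReal.ofReal_zero] at this; exact this
    exact le_antisymm (ge_of_tendsto htend (Filter.Eventually.of_forall hle)) zero_le
  have h0 : ((Bset n k)ᶜ.indicator (p : ℝ → ℂ)) =ᵐ[volume] 0 :=
    (eLpNorm_eq_zero_iff ((Lp.aestronglyMeasurable p).indicator
      (measurableSet_Bset n k).compl) (by norm_num)).1 key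
  filter_upwards [h0] with t ht
  have hsplit : (Bset n k).indicator (⇑p : ℝ → ℂ) t + (Bset n k)ᶜ.indicator (⇑p : ℝ → ℂ) t
      = (p : ℝ → ℂ) t := by
    by_cases hmem : t ∈ Bset n k
    · rw [Set.indicator_of_mem hmem, Set.indicator_of_notMem (by simpa using hmem), add_zero]
    · rw [Set.indicator_of_notMem hmem, Set.indicator_of_mem (by simpa using hmem), zero_add]
  have : ((Bset n k)ᶜ.indicator (⇑p : ℝ → ℂ)) t = 0 := ht
  rw [← hsplit, this, add_zero]

end Vpart

/-- `V0` as a submodule -/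
def V0sub (n k : ℕ) : Submodule ℂ L2 where
  carrier := V0 n k
  zero_mem' := by
    show (⇑(0 : L2) : ℝ → ℂ) =ᵐ[volume] (Bset n k).indicator ⇑(0 : L2)
    filter_upwards [Lp.coeFn_zero ℂ 2 (volume : Measure ℝ)] with t ht
    rw [ht]
    by_cases hmem : t ∈ Bset n k
    · rw [Set.indicator_of_mem hmem, ht]
    · rw [Set.indicator_of_notMem hmem]
      rfl
  add_mem' := by
    intro a b ha hb
    show (⇑(a + b) : ℝ → ℂ) =ᵐ[volume] (Bset n k).indicator ⇑(a + b)
    filter_upwards [Lp.coeFn_add a b, ha, hb] with t ht hta htb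
    by_cases hmem : t ∈ Bset n k
    · rw [Set.indicator_of_mem hmem]
    · rw [Set.indicator_of_notMem hmem, ht, Pi.add_apply, hta, htb,
        Set.indicator_of_notMem hmem, Set.indicator_of_notMem hmem, add_zero]
  smul_mem' := by
    intro c a ha
    show (⇑(c • a) : ℝ → ℂ) =ᵐ[volume] (Bset n k).indicator ⇑(c • a)
    filter_upwards [Lp.coeFn_smul c a, ha] with t ht hta
    by_cases hmem : t ∈ Bset n k
    · rw [Set.indicator_of_mem hmem]
    · rw [Set.indicator_of_notMem hmem, ht, Pi.smul_apply, hta,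
        Set.indicator_of_notMem hmem, smul_zero]

lemma Uspace_eq (F : L2 ≃ₗᵢ[ℂ] L2) (S : Submodule ℂ L2) (n k : ℕ)
    (hsub : Uspace F (S : Set L2) n k ⊆ (S : Set L2)) :
    Uspace F (S : Set L2) n k = (S : Set L2) ∩ (⇑F ⁻¹' V0 n k) := by
  ext f
  constructor
  · rintro hf
    refine ⟨hsub hf, ?_⟩
    obtain ⟨g, _, hfg⟩ := hf
    show (⇑(F f) : ℝ → ℂ) =ᵐ[volume] (Bset n k).indicator ⇑(F f)
    filter_upwards [hfg, (hfg.indicator (s := Bset n k))] with t ht hti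
    rw [ht, hti, Set.indicator_indicator, Set.inter_self]
  · rintro ⟨hfS, hfV⟩
    exact ⟨f, hfS, hfV⟩


lemma tendsto_eLpNorm_zero {u : ℕ → ℝ → ℂ} {b : ℝ → ℂ}
    (hu : ∀ m, AEStronglyMeasurable (u m) volume) (hb : MemLp b 2 volume)
    (hbound : ∀ m, ∀ᵐ x ∂(volume : Measure ℝ), ‖u m x‖ ≤ ‖b x‖)
    (hlim : ∀ᵐ x ∂(volume : Measure ℝ), Filter.Tendsto (fun m => u m x) Filter.atTop (nhds 0)) :
    Filter.Tendsto (fun m => eLpNorm (u m) 2 volume) Filter.atTop (nhds 0) := by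
  have h2 : ∀ f : ℝ → ℂ, eLpNorm f 2 volume
      = (∫⁻ x : ℝ, (‖f x‖₊ : ℝ≥0∞) ^ (2:ℝ) ∂volume) ^ (1/(2:ℝ)) := by
    intro f
    rw [eLpNorm_eq_lintegral_rpow_enorm_toReal (by norm_num) (by norm_num)]
    norm_num; rfl
  have hbint : (∫⁻ x : ℝ, (‖b x‖₊ : ℝ≥0∞) ^ (2:ℝ) ∂volume) ≠ ⊤ := by
    intro hcon
    have := hb.2
    rw [h2 b, hcon] at this
    simp [ENNReal.top_rpow_of_pos] at this
  have hL : Filter.Tendsto (fun m => ∫⁻ x : ℝ, (‖u m x‖₊ : ℝ≥0∞) ^ (2:ℝ) ∂volume)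
      Filter.atTop (nhds (∫⁻ _ : ℝ, ((0:ℝ≥0∞)) ∂volume)) := by
    apply tendsto_lintegral_of_dominated_convergence' (fun x => (‖b x‖₊ : ℝ≥0∞) ^ (2:ℝ))
    · exact fun m => (hu m).enorm.pow_const _
    · intro m
      filter_upwards [hbound m] with x hx
      apply ENNReal.rpow_le_rpow _ (by norm_num)
      exact_mod_cast ENNReal.coe_le_coe.2 (by exact_mod_cast hx)
    · exact hbint
    · filter_upwards [hlim] with x hx
      have h0 : Filter.Tendsto (fun m => (‖u m x‖₊ : ℝ≥0∞)) Filter.atTop (nhds 0) := by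
        have h0' : Filter.Tendsto (fun m => (‖u m x‖₊ : ℝ≥0)) Filter.atTop (nhds 0) :=
          NNReal.tendsto_coe.1 (by simpa using hx.norm)
        simpa using ENNReal.tendsto_coe.2 h0'
      have := Filter.Tendsto.ennrpow_const (2:ℝ) h0
      simpa [ENNReal.zero_rpow_of_pos] using this
  rw [lintegral_zero] at hL
  rw [ENNReal.tendsto_nhds_zero]
  intro ε hε
  have hε2 : (0:ℝ≥0∞) < ε ^ (2:ℝ) := ENNReal.rpow_pos_of_nonneg hε (by norm_num)
  filter_upwards [(ENNReal.tendsto_nhds_zero.1 hL) (ε ^ (2:ℝ)) hε2] with m hm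
  rw [h2]
  calc (∫⁻ x : ℝ, (‖u m x‖₊ : ℝ≥0∞) ^ (2:ℝ) ∂volume) ^ (1/(2:ℝ))
      ≤ (ε ^ (2:ℝ)) ^ (1/(2:ℝ)) := ENNReal.rpow_le_rpow hm (by norm_num)
    _ = ε := by rw [← ENNReal.rpow_mul]; norm_num

section Span

variable (F : L2 ≃ₗᵢ[ℂ] L2)
variable (S : Submodule ℂ L2)

lemma span_step (hF : IsFourierTransform F) (hinv : ∀ f ∈ S, ∀ j : ℤ, Tr (j : ℝ) f ∈ S)
    {f : L2} (hf : f ∈ S) {P : C(AddCircle (1:ℝ), ℂ)}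
    (hP : P ∈ Submodule.span ℂ (Set.range (@fourier 1))) :
    ∃ q ∈ S, (⇑(F q) : ℝ → ℂ) =ᵐ[volume]
      fun ω : ℝ => P (ω : AddCircle (1:ℝ)) * (F f : ℝ → ℂ) ω := by
  induction hP using Submodule.span_induction with
  | mem P hPmem =>
    obtain ⟨i, rfl⟩ := hPmem
    refine ⟨Tr (((-i : ℤ) : ℝ)) f, hinv f hf (-i), ?_⟩
    have hA := F_Tr F hF (((-i : ℤ) : ℝ)) f
    rw [hA]
    have hb : ∀ x, ‖eA (((-i : ℤ) : ℝ)) x‖ ≤ 1 := fun x => le_of_eq (eA_norm _ x)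
    filter_upwards [mul2_coe (eA_cont _).aestronglyMeasurable hb (F f)] with ω hω
    rw [hω]
    congr 1
    rw [eA, fourier_coe_apply]
    congr 1
    push_cast
    ring
  | zero =>
    refine ⟨0, Submodule.zero_mem S, ?_⟩
    rw [map_zero]
    filter_upwards [Lp.coeFn_zero ℂ 2 (volume : Measure ℝ)] with ω hω
    simp [hω]
  | add P Q hPm hQm ihP ihQ =>
    obtain ⟨q₁, hq₁, hq₁e⟩ := ihP
    obtain ⟨q₂, hq₂, hq₂e⟩ := ihQ
    refine ⟨q₁ + q₂, Submodule.add_mem S hq₁ hq₂, ?_⟩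
    rw [map_add]
    filter_upwards [Lp.coeFn_add (F q₁) (F q₂), hq₁e, hq₂e] with ω hω h1 h2
    rw [hω, Pi.add_apply, h1, h2]
    simp only [ContinuousMap.add_apply]
    ring
  | smul c P hPm ihP =>
    obtain ⟨q, hq, hqe⟩ := ihP
    refine ⟨c • q, Submodule.smul_mem S c hq, ?_⟩
    rw [F.map_smul]
    filter_upwards [Lp.coeFn_smul c (F q), hqe] with ω hω h1
    rw [hω, Pi.smul_apply, h1]
    simp only [ContinuousMap.smul_apply, smul_eq_mul]
    ring

lemma cont_multiplier_mem (hF : IsFourierTransform F) (hS : IsClosed (S : Set L2))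
    (hinv : ∀ f ∈ S, ∀ j : ℤ, Tr (j : ℝ) f ∈ S)
    {f : L2} (hf : f ∈ S) {w : ℝ → ℂ} {Wc : C(AddCircle (1:ℝ), ℂ)}
    (hw : ∀ ω : ℝ, w ω = Wc (ω : AddCircle (1:ℝ)))
    (g : L2) (hg : (⇑g : ℝ → ℂ) =ᵐ[volume] fun ω => w ω * (F f : ℝ → ℂ) ω) :
    F.symm g ∈ S := by
  suffices hcl : F.symm g ∈ closure (S : Set L2) by
    have := hS.closure_eq
    rw [this] at hcl
    exact hcl
  rw [Metric.mem_closure_iff]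
  intro ε hε
  set c := ‖F f‖ with hc
  have hc0 : (0:ℝ) ≤ c := norm_nonneg _
  set δ := ε / (c + 1) with hδ
  have hδ0 : 0 < δ := div_pos hε (by linarith)
  -- approximate Wc by a trigonometric polynomial
  have hWc : Wc ∈ closure ((Submodule.span ℂ (Set.range (@fourier 1)) :
      Submodule ℂ C(AddCircle (1:ℝ), ℂ)) : Set C(AddCircle (1:ℝ), ℂ)) := by
    have := span_fourier_closure_eq_top (T := 1)
    have hmem : Wc ∈ ((Submodule.span ℂ (Set.range (@fourier 1))).topologicalClosure :
        Submodule ℂ C(AddCircle (1:ℝ), ℂ)) := by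
      rw [this]; trivial
    exact hmem
  obtain ⟨P, hPmem, hPd⟩ := Metric.mem_closure_iff.1 hWc δ hδ0
  obtain ⟨q, hq, hqe⟩ := span_step F S hF hinv hf hPmem
  refine ⟨q, hq, ?_⟩
  have hdist : dist (F.symm g) q = dist g (F q) := by
    rw [← F.dist_map (F.symm g) q, F.apply_symm_apply]
  rw [hdist, Lp.dist_def]
  have h1 : (⇑g - ⇑(F q) : ℝ → ℂ) =ᵐ[volume]
      fun ω => (w ω - P (ω : AddCircle (1:ℝ))) * (F f : ℝ → ℂ) ω := by
    filter_upwards [hg, hqe] with ω h1 h2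
    rw [Pi.sub_apply, h1, h2]
    ring
  rw [eLpNorm_congr_ae h1]
  have h2 : eLpNorm (fun ω => (w ω - P (ω : AddCircle (1:ℝ))) * (F f : ℝ → ℂ) ω) 2 volume
      ≤ eLpNorm (fun ω => (dist Wc P : ℂ) * (F f : ℝ → ℂ) ω) 2 volume := by
    apply eLpNorm_mono_ae
    apply Filter.Eventually.of_forall
    intro ω
    rw [norm_mul, norm_mul]
    apply mul_le_mul_of_nonneg_right _ (norm_nonneg _)
    rw [hw ω]
    have : Wc (ω : AddCircle (1:ℝ)) - P (ω : AddCircle (1:ℝ)) = (Wc - P) (ω : AddCircle (1:ℝ)) := by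
      simp
    rw [this]
    calc ‖(Wc - P) (ω : AddCircle (1:ℝ))‖ ≤ ‖Wc - P‖ := ContinuousMap.norm_coe_le_norm _ _
      _ = dist Wc P := (dist_eq_norm Wc P).symm
      _ ≤ ‖(dist Wc P : ℂ)‖ := by rw [Complex.norm_real, Real.norm_eq_abs]; exact le_abs_self _
  have h3 : eLpNorm (fun ω => (dist Wc P : ℂ) * (F f : ℝ → ℂ) ω) 2 volume
      = (‖(dist Wc P : ℂ)‖₊ : ℝ≥0∞) * eLpNorm (⇑(F f) : ℝ → ℂ) 2 volume := by
    have : (fun ω => (dist Wc P : ℂ) * (F f : ℝ → ℂ) ω)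
        = (dist Wc P : ℂ) • (⇑(F f) : ℝ → ℂ) := by
      funext ω; simp [smul_eq_mul]
    rw [this, eLpNorm_const_smul, enorm_eq_nnnorm]
  calc (eLpNorm (fun ω => (w ω - P (ω : AddCircle (1:ℝ))) * (F f : ℝ → ℂ) ω) 2 volume).toReal
      ≤ ((‖(dist Wc P : ℂ)‖₊ : ℝ≥0∞) * eLpNorm (⇑(F f) : ℝ → ℂ) 2 volume).toReal := by
        apply ENNReal.toReal_mono
        · exact ENNReal.mul_ne_top ENNReal.coe_ne_top (Lp.eLpNorm_ne_top (F f))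
        · exact le_trans h2 (le_of_eq h3)
      _ = dist Wc P * c := by
          rw [ENNReal.toReal_mul, ENNReal.coe_toReal, hc, ← Lp.norm_def]
          congr 1
          rw [coe_nnnorm, Complex.norm_real, Real.norm_eq_abs, _root_.abs_of_nonneg dist_nonneg]
      _ < ε := by
          have h4 : dist Wc P * c ≤ δ * c := mul_le_mul_of_nonneg_right hPd.le hc0
          have h5 : δ * c < ε := by
            rw [hδ, div_mul_eq_mul_div, div_lt_iff₀ (by linarith : (0:ℝ) < c + 1)]
            nlinarith
          linarith

lemma limit_multiplier_mem (hF : IsFourierTransform F) (hS : IsClosed (S : Set L2))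
    (hinv : ∀ f ∈ S, ∀ j : ℤ, Tr (j : ℝ) f ∈ S)
    {f : L2} (hf : f ∈ S) {w : ℝ → ℂ} (φ : ℕ → ℝ → ℂ)
    (hφW : ∀ m, ∃ Wc : C(AddCircle (1:ℝ), ℂ), ∀ ω : ℝ, φ m ω = Wc (ω : AddCircle (1:ℝ)))
    (hφmeas : ∀ m, AEStronglyMeasurable (φ m) volume)
    (hφb : ∀ m x, ‖φ m x‖ ≤ 1)
    (hwb : ∀ x, ‖w x‖ ≤ 1) (hwmeas : AEStronglyMeasurable w volume)
    (hlim : ∀ᵐ x ∂(volume : Measure ℝ),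
      Filter.Tendsto (fun m => φ m x) Filter.atTop (nhds (w x)))
    (g : L2) (hg : (⇑g : ℝ → ℂ) =ᵐ[volume] fun ω => w ω * (F f : ℝ → ℂ) ω) :
    F.symm g ∈ S := by
  set u : ℕ → L2 := fun m => mul2 (φ m) (F f) with hu
  have humem : ∀ m, F.symm (u m) ∈ S := by
    intro m
    obtain ⟨Wc, hWc⟩ := hφW m
    exact cont_multiplier_mem F S hF hS hinv hf hWc (u m)
      (mul2_coe (hφmeas m) (hφb m) (F f))
  have hdist : Filter.Tendsto (fun m => dist (F.symm g) (F.symm (u m)))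
      Filter.atTop (nhds 0) := by
    have heq : ∀ m, dist (F.symm g) (F.symm (u m)) = dist g (u m) := fun m =>
      F.symm.dist_map g (u m)
    simp_rw [heq, Lp.dist_def]
    have h1 : ∀ m, eLpNorm (⇑g - ⇑(u m) : ℝ → ℂ) 2 volume
        = eLpNorm (fun x => (w x - φ m x) * (F f : ℝ → ℂ) x) 2 volume := by
      intro m
      apply eLpNorm_congr_ae
      filter_upwards [hg, mul2_coe (hφmeas m) (hφb m) (F f)] with x hx1 hx2
      rw [Pi.sub_apply, hx1, hx2]
      ring
    simp_rw [h1]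
    have h2 : Filter.Tendsto
        (fun m => eLpNorm (fun x => (w x - φ m x) * (F f : ℝ → ℂ) x) 2 volume)
        Filter.atTop (nhds 0) := by
      apply tendsto_eLpNorm_zero (b := fun x => (2:ℝ) • (F f : ℝ → ℂ) x)
      · exact fun m => ((hwmeas.sub (hφmeas m)).mul (Lp.aestronglyMeasurable (F f)))
      · exact (Lp.memLp (F f)).const_smul (2:ℝ)
      · intro m
        apply Filter.Eventually.of_forall
        intro x
        rw [norm_mul, norm_smul, Real.norm_eq_abs]
        have h5 : ‖w x - φ m x‖ ≤ 2 := by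
          calc ‖w x - φ m x‖ ≤ ‖w x‖ + ‖φ m x‖ := norm_sub_le _ _
            _ ≤ 1 + 1 := add_le_add (hwb x) (hφb m x)
            _ = 2 := by norm_num
        have h6 : |(2:ℝ)| = 2 := by norm_num
        rw [h6]
        exact mul_le_mul_of_nonneg_right h5 (norm_nonneg _)
      · filter_upwards [hlim] with x hx
        have : Filter.Tendsto (fun m => w x - φ m x) Filter.atTop (nhds 0) := by
          have := (tendsto_const_nhds (x := w x) (f := Filter.atTop (α := ℕ))).sub hx
          simpa using this
        have h3 := this.mul_const ((F f : ℝ → ℂ) x)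
        simpa using h3
    have h4 : Filter.Tendsto (fun x : ℝ≥0∞ => x.toReal) (nhds 0) (nhds 0) := by
      have : ContinuousAt ENNReal.toReal 0 := ENNReal.continuousAt_toReal (by simp)
      simpa using this.tendsto
    exact h4.comp h2
  have htend : Filter.Tendsto (fun m => F.symm (u m)) Filter.atTop (nhds (F.symm g)) := by
    rw [tendsto_iff_dist_tendsto_zero]
    simpa [dist_comm] using hdist
  have := mem_closure_of_tendsto htend (Filter.Eventually.of_forall humem)
  rwa [hS.closure_eq] at this

end Span

section Mult

variable (j : ℤ) (n k : ℕ)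

/-- the phase function -/
def psiM : ℝ → ℂ := fun t =>
  Complex.exp ((2 * π * (-((j:ℝ)/(n:ℝ)) * ((k:ℝ) + t)) : ℝ) * Complex.I)

/-- the (discontinuous) 1-periodic multiplier equal to `e^{-2πi(j/n)ω}` on `Bset n k` -/
def wM : ℝ → ℂ := fun ω => psiM j n k (Int.fract ω)

/-- continuous cutoff -/
def rhoM (m : ℕ) : ℝ → ℝ := fun t => min 1 (min ((m+1) * t) ((m+1) * (1 - t)))

/-- continuous approximations to `wM` -/
def phiM (m : ℕ) : ℝ → ℂ := fun ω => rhoM m (Int.fract ω) • psiM j n k (Int.fract ω)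

lemma psiM_cont : Continuous (psiM j n k) := by
  apply Complex.continuous_exp.comp
  apply Continuous.mul _ continuous_const
  exact Complex.continuous_ofReal.comp (by continuity)

lemma psiM_norm (t : ℝ) : ‖psiM j n k t‖ = 1 := Complex.norm_exp_ofReal_mul_I _

lemma rhoM_cont (m : ℕ) : Continuous (rhoM m) := by
  apply Continuous.min continuous_const
  exact Continuous.min (by continuity) (by continuity)

lemma rhoM_zero (m : ℕ) : rhoM m 0 = 0 := by simp [rhoM]; positivity

lemma rhoM_one (m : ℕ) : rhoM m 1 = 0 := by simp [rhoM]; positivity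

lemma rhoM_nonneg (m : ℕ) {t : ℝ} (h0 : 0 ≤ t) (h1 : t ≤ 1) : 0 ≤ rhoM m t := by
  simp only [rhoM, le_min_iff]
  refine ⟨zero_le_one, mul_nonneg (by positivity) h0, mul_nonneg (by positivity) (by linarith)⟩

lemma rhoM_le_one (m : ℕ) (t : ℝ) : rhoM m t ≤ 1 := min_le_left _ _

lemma coe_fract (ω : ℝ) : ((Int.fract ω : ℝ) : AddCircle (1:ℝ)) = (ω : AddCircle (1:ℝ)) := by
  rw [Int.fract]
  rw [QuotientAddGroup.mk_sub]
  have : (((⌊ω⌋ : ℝ) : AddCircle (1:ℝ))) = 0 := by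
    rw [AddCircle.coe_eq_zero_iff]
    exact ⟨⌊ω⌋, by simp⟩
  rw [this, sub_zero]

lemma phiM_repr (m : ℕ) : ∃ Wc : C(AddCircle (1:ℝ), ℂ),
    ∀ ω : ℝ, phiM j n k m ω = Wc (ω : AddCircle (1:ℝ)) := by
  set gm : ℝ → ℂ := fun t => rhoM m t • psiM j n k t with hgm
  have hcont : Continuous gm := (rhoM_cont m).smul (psiM_cont j n k)
  have hends : gm 0 = gm (0 + 1) := by
    simp [hgm, rhoM_zero, rhoM_one]
  refine ⟨⟨AddCircle.liftIco 1 0 gm, AddCircle.liftIco_continuous hends hcont.continuousOn⟩, ?_⟩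
  intro ω
  have h1 : Int.fract ω ∈ Set.Ico (0:ℝ) (0 + 1) := by
    rw [zero_add]
    exact ⟨Int.fract_nonneg ω, Int.fract_lt_one ω⟩
  have h2 := AddCircle.liftIco_coe_apply (f := gm) h1
  show gm (Int.fract ω) = _
  rw [ContinuousMap.coe_mk, ← coe_fract ω, h2]

lemma phiM_norm_le (m : ℕ) (ω : ℝ) : ‖phiM j n k m ω‖ ≤ 1 := by
  rw [phiM, norm_smul, psiM_norm, mul_one, Real.norm_eq_abs,
    _root_.abs_of_nonneg (rhoM_nonneg m (Int.fract_nonneg ω) (Int.fract_lt_one ω).le)]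
  exact rhoM_le_one m _

lemma wM_norm (ω : ℝ) : ‖wM j n k ω‖ = 1 := psiM_norm j n k _

lemma wM_meas : AEStronglyMeasurable (wM j n k) volume :=
  ((psiM_cont j n k).measurable.comp measurable_fract).aestronglyMeasurable

lemma phiM_meas (m : ℕ) : AEStronglyMeasurable (phiM j n k m) volume := by
  apply Measurable.aestronglyMeasurable
  have : phiM j n k m = (fun t => rhoM m t • psiM j n k t) ∘ Int.fract := rfl
  rw [this]
  exact (((rhoM_cont m).smul (psiM_cont j n k)).measurable).comp measurable_fract

lemma phiM_tendsto : ∀ᵐ ω ∂(volume : Measure ℝ),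
    Filter.Tendsto (fun m => phiM j n k m ω) Filter.atTop (nhds (wM j n k ω)) := by
  have hnull : volume {ω : ℝ | Int.fract ω = 0} = 0 := by
    refine measure_mono_null ?_ ((Set.countable_range (fun i : ℤ => (i : ℝ))).measure_zero _)
    intro ω hω
    have h1 : Int.fract ω = 0 := hω
    rw [Int.fract] at h1
    exact ⟨⌊ω⌋, by linarith⟩
  rw [MeasureTheory.ae_iff]
  apply measure_mono_null _ hnull
  intro ω hω
  simp only [Set.mem_setOf_eq] at hω ⊢
  by_contra hfr
  apply hω
  set t := Int.fract ω with hdef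
  have ht0 : 0 < t := lt_of_le_of_ne (Int.fract_nonneg ω) (Ne.symm hfr)
  have ht1 : t < 1 := Int.fract_lt_one ω
  have ht1' : 0 < 1 - t := by linarith
  obtain ⟨M, hM⟩ := exists_nat_ge (max (1/t) (1/(1-t)))
  apply Filter.Tendsto.congr' _ tendsto_const_nhds
  rw [Filter.EventuallyEq, Filter.eventually_atTop]
  refine ⟨M, fun m hm => ?_⟩
  have hm1 : (1/t) ≤ (m:ℝ) + 1 := by
    calc (1/t) ≤ max (1/t) (1/(1-t)) := le_max_left _ _
      _ ≤ (M:ℝ) := hM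
      _ ≤ (m:ℝ) := by exact_mod_cast hm
      _ ≤ (m:ℝ) + 1 := by linarith
  have hm2 : (1/(1-t)) ≤ (m:ℝ) + 1 := by
    calc (1/(1-t)) ≤ max (1/t) (1/(1-t)) := le_max_right _ _
      _ ≤ (M:ℝ) := hM
      _ ≤ (m:ℝ) := by exact_mod_cast hm
      _ ≤ (m:ℝ) + 1 := by linarith
  have h1 : (1:ℝ) ≤ ((m:ℝ)+1) * t := by
    rw [div_le_iff₀ ht0] at hm1
    linarith
  have h2 : (1:ℝ) ≤ ((m:ℝ)+1) * (1-t) := by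
    rw [div_le_iff₀ ht1'] at hm2
    linarith
  have hρ : rhoM m t = 1 := by
    rw [rhoM]
    rw [min_eq_left]
    exact le_min h1 h2
  show wM j n k ω = phiM j n k m ω
  rw [wM, phiM, ← hdef, hρ, one_smul]

lemma wM_on_B (hn : 0 < n) {ω : ℝ} (hω : ω ∈ Bset n k) :
    wM j n k ω = eA ((j:ℝ)/(n:ℝ)) ω := by
  obtain ⟨j', hj⟩ := hω
  obtain ⟨hj1, hj2⟩ := hj
  have hfr : Int.fract ω = ω - ((k:ℝ) + (n:ℝ) * (j':ℝ)) := by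
    have h1 : Int.fract (ω - ((k:ℝ) + (n:ℝ)*(j':ℝ))) = Int.fract ω := by
      have h := Int.fract_sub_intCast ω ((k:ℤ) + (n:ℤ)*j')
      push_cast at h
      exact h
    have h2 : Int.fract (ω - ((k:ℝ) + (n:ℝ)*(j':ℝ))) = ω - ((k:ℝ) + (n:ℝ)*(j':ℝ)) := by
      apply Int.fract_eq_self.2
      constructor
      · linarith
      · linarith
    exact h1.symm.trans h2
  rw [wM, psiM, eA, hfr]
  have hne : (n:ℝ) ≠ 0 := by exact_mod_cast hn.ne'
  have harg : (2 * π * (-((j:ℝ)/(n:ℝ)) * ((k:ℝ) + (ω - ((k:ℝ) + (n:ℝ) * (j':ℝ))))) : ℝ)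
      = 2 * π * (-((j:ℝ)/(n:ℝ)) * ω) + 2 * π * ((j:ℝ) * (j':ℝ)) := by
    field_simp
    ring
  rw [harg, Complex.ofReal_add, add_mul, Complex.exp_add]
  have hone : Complex.exp (((2 * π * ((j:ℝ) * (j':ℝ)) : ℝ) : ℂ) * Complex.I) = 1 := by
    have h := Complex.exp_int_mul_two_pi_mul_I (j * j')
    have harg2 : (((2 * π * ((j:ℝ) * (j':ℝ)) : ℝ) : ℂ) * Complex.I)
        = ((j * j' : ℤ) : ℂ) * (2 * (π:ℂ) * Complex.I) := by
      push_cast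
      ring
    rw [harg2, h]
  rw [hone, mul_one]

end Mult

lemma trans_mem (F : L2 ≃ₗᵢ[ℂ] L2) (hF : IsFourierTransform F)
    (n : ℕ) (hn : 0 < n) (k : ℕ) (S : Submodule ℂ L2) (hS : IsClosed (S : Set L2))
    (hinv : ∀ f ∈ S, ∀ j : ℤ, Tr (j : ℝ) f ∈ S)
    (hsub : Uspace F (S : Set L2) n k ⊆ (S : Set L2))
    {f : L2} (hf : f ∈ Uspace F (S : Set L2) n k) (j : ℤ) :
    Tr ((j:ℝ)/(n:ℝ)) f ∈ Uspace F (S : Set L2) n k := by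
  have hchar := Uspace_eq F S n k hsub
  have hf' : f ∈ (S : Set L2) ∩ (⇑F ⁻¹' V0 n k) := by rw [← hchar]; exact hf
  obtain ⟨hfS, hfV⟩ := hf'
  have hsupp : (⇑(F f) : ℝ → ℂ) =ᵐ[volume] (Bset n k).indicator ⇑(F f) := hfV
  set a : ℝ := (j:ℝ)/(n:ℝ) with ha
  set g : L2 := F (Tr a f) with hg
  have hA : (⇑g : ℝ → ℂ) =ᵐ[volume] fun ω => eA a ω * (F f : ℝ → ℂ) ω := by
    rw [hg, F_Tr F hF a f]
    exact mul2_coe (eA_cont a).aestronglyMeasurable (fun x => le_of_eq (eA_norm a x)) (F f)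
  have hWeq : (⇑g : ℝ → ℂ) =ᵐ[volume] fun ω => wM j n k ω * (F f : ℝ → ℂ) ω := by
    filter_upwards [hA, hsupp] with ω h1 h2
    by_cases hmem : ω ∈ Bset n k
    · rw [h1, wM_on_B j n k hn hmem]
    · rw [h1, h2, Set.indicator_of_notMem hmem, mul_zero, mul_zero]
  have hTS : Tr a f ∈ S := by
    have := limit_multiplier_mem F S hF hS hinv hfS (phiM j n k)
      (phiM_repr j n k) (phiM_meas j n k) (phiM_norm_le j n k)
      (fun x => le_of_eq (wM_norm j n k x)) (wM_meas j n k)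
      (phiM_tendsto j n k) g hWeq
    rwa [hg, F.symm_apply_apply] at this
  have hsupp' : (⇑g : ℝ → ℂ) =ᵐ[volume] (Bset n k).indicator ⇑g := by
    filter_upwards [hA, hsupp] with ω h1 h2
    by_cases hmem : ω ∈ Bset n k
    · rw [Set.indicator_of_mem hmem]
    · rw [Set.indicator_of_notMem hmem, h1, h2, Set.indicator_of_notMem hmem, mul_zero]
  exact ⟨Tr a f, hTS, hsupp'⟩

end Stmt8aux

/-- If `S` is a SIS and `U_k ⊆ S`, then `U_k` is a closed subspace of `L²(ℝ)` invariant
under translations by `(1/n)ℤ`, in particular under `ℤ`. -/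
theorem stmt8 (F : L2 ≃ₗᵢ[ℂ] L2) (hF : IsFourierTransform F)
    (n : ℕ) (hn : 0 < n) (k : ℕ) (hk : k < n)
    (S : Submodule ℂ L2) (hS : IsClosed (S : Set L2))
    (hinv : ∀ f ∈ S, ∀ j : ℤ, Tr (j : ℝ) f ∈ S)
    (hsub : Uspace F (S : Set L2) n k ⊆ (S : Set L2)) :
    IsClosed (Uspace F (S : Set L2) n k) ∧
    (∃ U : Submodule ℂ L2, (U : Set L2) = Uspace F (S : Set L2) n k) ∧
    (∀ f ∈ Uspace F (S : Set L2) n k, ∀ j : ℤ,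
        Tr ((j : ℝ) / n) f ∈ Uspace F (S : Set L2) n k) ∧
    (∀ f ∈ Uspace F (S : Set L2) n k, ∀ j : ℤ,
        Tr (j : ℝ) f ∈ Uspace F (S : Set L2) n k) := by
  have hchar := Stmt8aux.Uspace_eq F S n k hsub
  refine ⟨?_, ?_, ?_, ?_⟩
  · rw [hchar]
    exact hS.inter ((Stmt8aux.isClosed_V0 n k).preimage F.continuous)
  · refine ⟨S ⊓ (Stmt8aux.V0sub n k).comap (F.toLinearEquiv.toLinearMap), ?_⟩
    rw [hchar]
    rfl
  · intro f hf j
    exact Stmt8aux.trans_mem F hF n hn k S hS hinv hsub hf j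
  · intro f hf j
    have h := Stmt8aux.trans_mem F hF n hn k S hS hinv hsub hf (n * j)
    have heq : ((((n:ℤ) * j : ℤ) : ℝ))/(n:ℝ) = (j:ℝ) := by
      have hne : (n:ℝ) ≠ 0 := by exact_mod_cast hn.ne'
      push_cast
      field_simp
    rwa [heq] at h
end
end

section
/- Let S be a shift-invariant subspace of L²(ℝ), n a positive integer, B_k = ⋃_{j∈ℤ}([k,k+1)+nj), and U_k = {f ∈ L²(ℝ) : f̂ = ĝ·χ_{B_k} for some g ∈ S}. Then the following are equivalent: (a) S is (1/n)ℤ-invariant; (b) U_k ⊆ S for k = 0,…,n−1; (c) for every f ∈ S, the function f^k defined by (f^k)^ = f̂·χ_{B_k} belongs to S for each k. Moreover, in that case S is the orthogonal direct sum S = U_0 ⊕ ⋯ ⊕ U_{n−1}. -/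
open MeasureTheory FourierTransform Filter Set Complex
open scoped Real ENNReal NNReal

noncomputable section

/-- the character `ω ↦ e^{-2πiaω}` -/
def eChar (a : ℝ) (ω : ℝ) : ℂ := Complex.exp ((-(2 * π * a * ω) : ℝ) * Complex.I)

lemma eChar_norm (a ω : ℝ) : ‖eChar a ω‖ = 1 := by
  simp [eChar, Complex.norm_exp]

lemma eChar_continuous (a : ℝ) : Continuous (eChar a) := by
  unfold eChar; fun_prop

lemma memLp_mul (m : ℝ → ℂ) (hm : AEStronglyMeasurable m volume) {C : ℝ}
    (hC : ∀ ω, ‖m ω‖ ≤ C) (h : L2) :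
    MemLp (fun ω => m ω * (h : ℝ → ℂ) ω) 2 volume :=
  MemLp.of_le_mul (Lp.memLp h) (hm.mul (Lp.aestronglyMeasurable h))
    (Eventually.of_forall fun ω => by
      rw [norm_mul]; exact mul_le_mul_of_nonneg_right (hC ω) (norm_nonneg _))

lemma fourierIntegral_congr_ae {f g : ℝ → ℂ} (h : f =ᵐ[volume] g) : 𝓕 f = 𝓕 g := by
  ext w
  rw [Real.fourier_eq, Real.fourier_eq]
  exact integral_congr_ae (h.mono fun x hx => by simp only [hx])

lemma fourierIntegral_translate (a : ℝ) (f : ℝ → ℂ) :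
    𝓕 (fun x => f (x - a)) = fun w => eChar a w * 𝓕 f w := by
  have h := VectorFourier.fourierIntegral_comp_add_right (𝐞) (volume : Measure ℝ)
    (innerₗ ℝ) f (-a)
  have h2 : (fun x : ℝ => f (x - a)) = f ∘ fun v => v + -a := by
    ext x; simp [sub_eq_add_neg]
  show VectorFourier.fourierIntegral 𝐞 volume (innerₗ ℝ) _ = _
  rw [h2, h]
  ext w
  show _ • VectorFourier.fourierIntegral 𝐞 volume (innerₗ ℝ) f w = _
  simp only [Circle.smul_def, Real.fourierChar_apply, innerₗ_apply_apply, RCLike.inner_apply,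
    conj_trivial, eChar]
  rw [show VectorFourier.fourierIntegral 𝐞 volume (innerₗ ℝ) f w = 𝓕 f w from rfl]
  norm_num
  left
  push_cast
  ring

lemma mulE_memLp (a : ℝ) (h : L2) : MemLp (fun ω => eChar a ω * (h : ℝ → ℂ) ω) 2 volume :=
  memLp_mul _ (eChar_continuous a).aestronglyMeasurable (fun ω => (eChar_norm a ω).le) h

lemma FT_Tr (F : L2 ≃ₗᵢ[ℂ] L2) (hF : IsFourierTransform F) (a : ℝ) (f : L2) :
    (F (Tr a f) : ℝ → ℂ) =ᵐ[volume] fun ω => eChar a ω * (F f : ℝ → ℂ) ω := by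
  set B : L2 → L2 := fun h => (mulE_memLp a (F h)).toLp _ with hB
  have hBcoe : ∀ h : L2, (B h : ℝ → ℂ) =ᵐ[volume] fun ω => eChar a ω * (F h : ℝ → ℂ) ω :=
    fun h => (mulE_memLp a (F h)).coeFn_toLp
  have key : (fun h : L2 => F (Tr a h)) = B := by
    have contA : Continuous fun h : L2 => F (Tr a h) :=
      F.continuous.comp (Lp.isometry_compMeasurePreserving (E := ℂ) (p := 2) _).continuous
    have contB : Continuous B := by
      refine (Isometry.of_dist_eq fun h h' => ?_).continuous
      rw [dist_eq_norm, dist_eq_norm, ← F.norm_map (h - h'), Lp.norm_def, Lp.norm_def]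
      congr 1
      have e1 : (↑(B h - B h') : ℝ → ℂ) =ᵐ[volume]
          fun ω => eChar a ω * ((F (h - h') : ℝ → ℂ) ω) := by
        have e2 : (↑(F (h - h')) : ℝ → ℂ) =ᵐ[volume] (F h : ℝ → ℂ) - (F h' : ℝ → ℂ) := by
          rw [map_sub]; exact Lp.coeFn_sub _ _
        filter_upwards [Lp.coeFn_sub (B h) (B h'), hBcoe h, hBcoe h', e2] with ω w1 w2 w3 w4
        simp only [Pi.sub_apply] at *
        rw [w1, w2, w3, w4]; ring
      rw [eLpNorm_congr_ae e1]
      exact eLpNorm_congr_norm_ae (Eventually.of_forall fun ω => by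
        rw [norm_mul, eChar_norm, one_mul])
    have hdense : DenseRange ((↑) : Lp.simpleFunc ℂ 2 (volume : Measure ℝ) → L2) :=
      Lp.simpleFunc.denseRange (by norm_num)
    refine Continuous.ext_on hdense contA contB ?_
    rintro _ ⟨s, rfl⟩
    have hint : Integrable ((s : L2) : ℝ → ℂ) volume := by
      have h1 := Lp.simpleFunc.toSimpleFunc_eq_toFun s
      have h2 : MemLp (⇑(Lp.simpleFunc.toSimpleFunc s)) 2 volume :=
        (Lp.memLp (s : L2)).ae_eq h1.symm
      exact ((SimpleFunc.memLp_iff_integrable two_ne_zero (by norm_num)).mp h2).congr h1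
    have hmp := measurePreserving_sub_right (volume : Measure ℝ) a
    have hTrcoe : (↑(Tr a (s : L2)) : ℝ → ℂ) =ᵐ[volume] (↑(s : L2) : ℝ → ℂ) ∘ (fun x => x - a) :=
      Lp.coeFn_compMeasurePreserving (s : L2) hmp
    have hTrint : Integrable ((Tr a (s : L2)) : ℝ → ℂ) volume :=
      (((hmp.integrable_comp (Lp.aestronglyMeasurable _)).mpr hint)).congr hTrcoe.symm
    have e3 : 𝓕 ((Tr a (s : L2)) : ℝ → ℂ) = fun w => eChar a w * 𝓕 ((s : L2) : ℝ → ℂ) w := by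
      rw [fourierIntegral_congr_ae hTrcoe]
      exact fourierIntegral_translate a _
    refine Lp.ext ?_
    calc (↑(F (Tr a (s : L2))) : ℝ → ℂ)
        =ᵐ[volume] 𝓕 ((Tr a (s : L2)) : ℝ → ℂ) := hF _ hTrint
      _ = fun w => eChar a w * 𝓕 ((s : L2) : ℝ → ℂ) w := e3
      _ =ᵐ[volume] fun ω => eChar a ω * (F (s : L2) : ℝ → ℂ) ω := by
          filter_upwards [hF _ hint] with ω w1; rw [w1]
      _ =ᵐ[volume] (↑(B (s : L2)) : ℝ → ℂ) := (hBcoe _).symm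
  have := congrFun key f
  rw [this]
  exact hBcoe f
section Mult
variable (F : L2 ≃ₗᵢ[ℂ] L2) (S : Submodule ℂ L2)

def Mult (m : ℝ → ℂ) : Prop :=
  ∀ f ∈ S, ∃ g ∈ S, (F g : ℝ → ℂ) =ᵐ[volume] fun ω => m ω * (F f : ℝ → ℂ) ω

variable {F S}

lemma Mult.mem {m : ℝ → ℂ} (hm : Mult F S m) {f g : L2} (hf : f ∈ S)
    (hg : (F g : ℝ → ℂ) =ᵐ[volume] fun ω => m ω * (F f : ℝ → ℂ) ω) : g ∈ S := by
  obtain ⟨g', hg', he⟩ := hm f hf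
  have : g = g' := F.injective (Lp.ext (hg.trans he.symm))
  rw [this]; exact hg'

lemma Mult.congr {m m' : ℝ → ℂ} (h : ∀ ω, m ω = m' ω) (hm : Mult F S m) : Mult F S m' := by
  intro f hf; obtain ⟨g, hg, he⟩ := hm f hf
  exact ⟨g, hg, he.trans (Filter.Eventually.of_forall fun ω => by simp only [h ω])⟩

lemma Mult.mul {m₁ m₂ : ℝ → ℂ} (h1 : Mult F S m₁) (h2 : Mult F S m₂) :
    Mult F S (fun ω => m₁ ω * m₂ ω) := by
  intro f hf
  obtain ⟨g₂, hg₂, he₂⟩ := h2 f hf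
  obtain ⟨g, hg, he⟩ := h1 g₂ hg₂
  refine ⟨g, hg, he.trans ?_⟩
  filter_upwards [he₂] with ω w; rw [w]; ring

lemma Mult.zero : Mult F S (fun _ => (0 : ℂ)) := by
  intro f hf
  refine ⟨0, S.zero_mem, ?_⟩
  rw [map_zero]
  filter_upwards [Lp.coeFn_zero ℂ 2 (volume : Measure ℝ)] with ω w
  simp [w]

lemma Mult.add {m₁ m₂ : ℝ → ℂ} (h1 : Mult F S m₁) (h2 : Mult F S m₂) :
    Mult F S (fun ω => m₁ ω + m₂ ω) := by
  intro f hf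
  obtain ⟨g₁, hg₁, he₁⟩ := h1 f hf
  obtain ⟨g₂, hg₂, he₂⟩ := h2 f hf
  refine ⟨g₁ + g₂, S.add_mem hg₁ hg₂, ?_⟩
  rw [map_add]
  filter_upwards [Lp.coeFn_add (F g₁) (F g₂), he₁, he₂] with ω w1 w2 w3
  rw [w1, Pi.add_apply, w2, w3]; ring

lemma Mult.smul {m : ℝ → ℂ} (c : ℂ) (h : Mult F S m) : Mult F S (fun ω => c * m ω) := by
  intro f hf
  obtain ⟨g, hg, he⟩ := h f hf
  refine ⟨c • g, S.smul_mem c hg, ?_⟩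
  rw [_root_.map_smul]
  filter_upwards [Lp.coeFn_smul c (F g), he] with ω w1 w2
  rw [w1, Pi.smul_apply, w2, smul_eq_mul]; ring

lemma Mult.sum {ι : Type*} {s : Finset ι} {t : ι → ℝ → ℂ} (h : ∀ i ∈ s, Mult F S (t i)) :
    Mult F S (fun ω => ∑ i ∈ s, t i ω) := by
  classical
  induction s using Finset.induction_on with
  | empty => exact Mult.zero.congr (by simp)
  | @insert a s' hx ih =>
    have := (h a (Finset.mem_insert_self a s')).add
      (ih fun i hi => h i (Finset.mem_insert_of_mem hi))
    exact this.congr fun ω => (Finset.sum_insert hx).symm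

lemma Mult.echar {a : ℝ} (hF : IsFourierTransform F) (htr : ∀ f ∈ S, Tr a f ∈ S) :
    Mult F S (eChar a) := fun f hf => ⟨Tr a f, htr f hf, FT_Tr F hF a f⟩

lemma Mult.limit (hS : IsClosed (S : Set L2)) {m : ℕ → ℝ → ℂ} {M : ℝ → ℂ} {C : NNReal}
    (hmult : ∀ N, Mult F S (m N))
    (hb : ∀ N ω, ‖m N ω‖₊ ≤ C)
    (hmeas : ∀ N, AEStronglyMeasurable (m N) volume)
    (hMmeas : AEStronglyMeasurable M volume) (hMb : ∀ ω, ‖M ω‖₊ ≤ C)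
    (hlim : ∀ ω, Filter.Tendsto (fun N => m N ω) atTop (nhds (M ω))) :
    Mult F S M := by
  intro f hf
  set v : ℝ → ℂ := (F f : ℝ → ℂ) with hv
  have hMb' : ∀ ω, ‖M ω‖ ≤ (C : ℝ) := fun ω => by exact_mod_cast hMb ω
  have hM2 : MemLp (fun ω => M ω * v ω) 2 volume := memLp_mul M hMmeas hMb' (F f)
  set G : L2 := F.symm (hM2.toLp _) with hG
  have hGcoe : (F G : ℝ → ℂ) =ᵐ[volume] fun ω => M ω * v ω := by
    rw [hG, F.apply_symm_apply]; exact hM2.coeFn_toLp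
  refine ⟨G, ?_, hGcoe⟩
  choose g hgS hge using fun N => (hmult N) f hf
  set ψ : ℕ → ℝ → ℝ≥0∞ := fun N ω => ENNReal.ofReal (‖(m N ω - M ω) * v ω‖ ^ 2) with hψ
  have hψeq : ∀ (N : ℕ) (ω : ℝ),
      ((‖(m N ω - M ω) * v ω‖₊ : ℝ≥0∞)) ^ (2 : ℝ) = ψ N ω := by
    intro N ω
    rw [hψ, ← enorm_eq_nnnorm, ← ofReal_norm,
      show (2:ℝ) = ((2:ℕ):ℝ) by norm_num, ENNReal.rpow_natCast,
      ← ENNReal.ofReal_pow (norm_nonneg _)]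
  have hnorm : ∀ N, ‖g N - G‖ = ((∫⁻ ω, ψ N ω ∂volume) ^ (1/2 : ℝ)).toReal := by
    intro N
    rw [← F.norm_map (g N - G), Lp.norm_def]
    have e1 : (↑(F (g N - G)) : ℝ → ℂ) =ᵐ[volume] fun ω => (m N ω - M ω) * v ω := by
      rw [map_sub]
      filter_upwards [Lp.coeFn_sub (F (g N)) (F G), hge N, hGcoe] with ω w1 w2 w3
      rw [w1, Pi.sub_apply, w2, w3]; ring
    rw [eLpNorm_congr_ae e1, eLpNorm_eq_lintegral_rpow_enorm_toReal two_ne_zero (by norm_num)]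
    congr 1
    rw [show ((2:ℝ≥0∞).toReal) = (2:ℝ) by norm_num]
    · exact congrArg (· ^ (1/2:ℝ)) (lintegral_congr fun ω => hψeq N ω)
  have hFf2 : ∫⁻ ω, (‖v ω‖₊ : ℝ≥0∞) ^ (2 : ℝ) ∂volume ≠ ∞ := by
    have h1 := Lp.eLpNorm_ne_top (F f)
    rw [eLpNorm_eq_lintegral_rpow_enorm_toReal two_ne_zero (by norm_num)] at h1
    simp only [enorm_eq_nnnorm] at h1
    rw [show ((2:ℝ≥0∞).toReal) = (2:ℝ) by norm_num] at h1
    intro hcon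
    rw [hcon] at h1
    simp [ENNReal.top_rpow_of_pos] at h1
  have hψbound : ∀ N, ψ N ≤ᵐ[volume] fun ω => ((2 * C : ℝ≥0) : ℝ≥0∞) ^ (2:ℝ) * (‖v ω‖₊ : ℝ≥0∞) ^ (2:ℝ) := by
    intro N
    refine Filter.Eventually.of_forall fun ω => ?_
    rw [← hψeq N ω]
    calc ((‖(m N ω - M ω) * v ω‖₊ : ℝ≥0∞)) ^ (2:ℝ)
        ≤ (((2 * C : ℝ≥0) : ℝ≥0∞) * (‖v ω‖₊ : ℝ≥0∞)) ^ (2:ℝ) := by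
          refine ENNReal.rpow_le_rpow ?_ (by norm_num)
          rw [← ENNReal.coe_mul, ENNReal.coe_le_coe, nnnorm_mul]
          refine mul_le_mul_of_nonneg_right ?_ zero_le
          calc ‖m N ω - M ω‖₊ ≤ ‖m N ω‖₊ + ‖M ω‖₊ := nnnorm_sub_le _ _
            _ ≤ C + C := add_le_add (hb N ω) (hMb ω)
            _ = 2 * C := (two_mul C).symm
      _ = _ := ENNReal.mul_rpow_of_nonneg _ _ (by norm_num)
  have hψmeas : ∀ N, AEMeasurable (ψ N) volume := by
    intro N
    refine ENNReal.measurable_ofReal.comp_aemeasurable ?_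
    exact ((((hmeas N).sub hMmeas).mul (Lp.aestronglyMeasurable (F f))).norm.aemeasurable).pow_const 2
  have hψlim : ∀ ω, Filter.Tendsto (fun N => ψ N ω) atTop (nhds 0) := by
    intro ω
    have t1 : Filter.Tendsto (fun N => ‖(m N ω - M ω) * v ω‖ ^ 2) atTop (nhds 0) := by
      have : Filter.Tendsto (fun N => (m N ω - M ω) * v ω) atTop (nhds 0) := by
        have := ((hlim ω).sub (tendsto_const_nhds (x := M ω))).mul_const (v ω)
        simpa using this
      have := (this.norm.pow 2)
      simpa using this
    have := (ENNReal.continuous_ofReal.tendsto 0).comp t1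
    simpa [hψ, Function.comp_def] using this
  have hlint : Filter.Tendsto (fun N => ∫⁻ ω, ψ N ω ∂volume) atTop (nhds 0) := by
    have h0 : (0:ℝ≥0∞) = ∫⁻ (_ : ℝ), (0:ℝ≥0∞) ∂volume := by simp
    rw [h0]
    refine tendsto_lintegral_of_dominated_convergence' _ hψmeas hψbound ?_ ?_
    · have hc : (((2 * C : ℝ≥0) : ℝ≥0∞)) ^ (2:ℝ) ≠ ⊤ :=
        ENNReal.rpow_ne_top_of_nonneg (by norm_num) ENNReal.coe_ne_top
      rw [lintegral_const_mul' _ _ hc]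
      exact ENNReal.mul_ne_top hc hFf2
    · exact Filter.Eventually.of_forall hψlim
  have hnt : Filter.Tendsto (fun N => ‖g N - G‖) atTop (nhds 0) := by
    have t1 : Filter.Tendsto (fun N => ((∫⁻ ω, ψ N ω ∂volume) ^ (1/2:ℝ))) atTop (nhds 0) := by
      have := (ENNReal.continuous_rpow_const (y := (1/2:ℝ)).tendsto 0).comp hlint
      simpa [ENNReal.zero_rpow_of_pos, Function.comp_def] using this
    have t2 := (ENNReal.tendsto_toReal (by simp : (0:ℝ≥0∞) ≠ ∞)).comp t1
    simp only [Function.comp_def] at t2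
    simpa [hnorm] using t2
  have hgG : Filter.Tendsto g atTop (nhds G) := tendsto_iff_norm_sub_tendsto_zero.mpr hnt
  exact hS.mem_of_tendsto hgG (Filter.Eventually.of_forall hgS)

end Mult

instance : Fact ((0:ℝ) < 1) := ⟨one_pos⟩

lemma coe_fract_addCircle (ω : ℝ) : ((Int.fract ω : ℝ) : AddCircle (1:ℝ)) = (ω : AddCircle (1:ℝ)) := by
  rw [QuotientAddGroup.eq]
  refine ⟨⌊ω⌋, ?_⟩
  simp only [zsmul_eq_mul, mul_one]
  rw [neg_add_eq_sub, Int.fract]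
  push_cast
  ring

lemma mult_of_span {F : L2 ≃ₗᵢ[ℂ] L2} {S : Submodule ℂ L2} (hF : IsFourierTransform F)
    (hinv : ∀ f ∈ S, ∀ j : ℤ, Tr (j : ℝ) f ∈ S)
    {p : C(AddCircle (1:ℝ), ℂ)}
    (hp : p ∈ Submodule.span ℂ (Set.range (fourier (T := 1)))) :
    Mult F S (fun ω : ℝ => p (ω : AddCircle (1:ℝ))) := by
  induction hp using Submodule.span_induction with
  | mem x hx =>
    obtain ⟨ℓ, rfl⟩ := hx
    have htr : ∀ f ∈ S, Tr (-(ℓ:ℝ)) f ∈ S := by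
      intro f hf
      have := hinv f hf (-ℓ)
      simpa using this
    refine (Mult.echar hF htr).congr fun ω => ?_
    rw [eChar, fourier_coe_apply]
    congr 1
    push_cast
    ring
  | zero => exact Mult.zero.congr (by simp)
  | add x y hx hy ihx ihy => exact (ihx.add ihy).congr (by simp)
  | smul c x hx ih => exact (ih.smul c).congr (by simp)

lemma mult_fract {F : L2 ≃ₗᵢ[ℂ] L2} {S : Submodule ℂ L2} (hF : IsFourierTransform F)
    (hS : IsClosed (S : Set L2)) (hinv : ∀ f ∈ S, ∀ j : ℤ, Tr (j : ℝ) f ∈ S) (θ : ℝ) :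
    Mult F S (fun ω => Complex.exp ((θ * Int.fract ω : ℝ) * Complex.I)) := by
  set M : ℝ → ℂ := fun ω => Complex.exp ((θ * Int.fract ω : ℝ) * Complex.I) with hM
  set h : ℕ → ℝ → ℂ :=
    fun N t => Complex.exp ((θ * (t * min 1 (((N:ℝ)+1) * (1 - t))) : ℝ) * Complex.I) with hh
  have hcont : ∀ N, Continuous (h N) := by
    intro N
    apply Complex.continuous_exp.comp
    fun_prop
  have hper : ∀ N, h N 0 = h N 1 := by intro N; simp [hh]
  have hnorm1 : ∀ N t, ‖h N t‖ = 1 := fun N t => by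
    simp [hh, Complex.norm_exp]
  set φ : ℕ → C(AddCircle (1:ℝ), ℂ) := fun N =>
    ⟨AddCircle.liftIco 1 0 (h N),
      AddCircle.liftIco_zero_continuous (hper N) (hcont N).continuousOn⟩ with hφ
  have hφcoe : ∀ (N : ℕ) (ω : ℝ), φ N (ω : AddCircle (1:ℝ)) = h N (Int.fract ω) := by
    intro N ω
    rw [← coe_fract_addCircle ω]
    show AddCircle.liftIco 1 0 (h N) _ = _
    exact AddCircle.liftIco_coe_apply
      (by constructor
          · exact Int.fract_nonneg ω
          · rw [zero_add]; exact Int.fract_lt_one ω)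
  have hdense : ∀ N : ℕ, ∃ p ∈ Submodule.span ℂ (Set.range (fourier (T := 1))),
      dist (φ N) p < 1/((N:ℝ)+1) := by
    intro N
    have hmem : φ N ∈ closure ((Submodule.span ℂ (Set.range (fourier (T := 1)))) : Set _) := by
      rw [← Submodule.topologicalClosure_coe, span_fourier_closure_eq_top]
      trivial
    exact Metric.mem_closure_iff.mp hmem _ (by positivity)
  choose p hpspan hpdist using hdense
  have hpev : ∀ (N : ℕ) (ω : ℝ), ‖p N (ω : AddCircle (1:ℝ)) - φ N (ω : AddCircle (1:ℝ))‖ < 1/((N:ℝ)+1) := by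
    intro N ω
    calc ‖p N (ω : AddCircle (1:ℝ)) - φ N (ω : AddCircle (1:ℝ))‖
        = ‖(p N - φ N) (ω : AddCircle (1:ℝ))‖ := by rw [ContinuousMap.sub_apply]
      _ ≤ ‖p N - φ N‖ := ContinuousMap.norm_coe_le_norm _ _
      _ = dist (φ N) (p N) := by rw [dist_eq_norm, ← norm_neg]; congr 1; abel
      _ < 1/((N:ℝ)+1) := hpdist N
  refine Mult.limit hS (m := fun N ω => p N (ω : AddCircle (1:ℝ))) (C := 2)
    (fun N => mult_of_span hF hinv (hpspan N)) ?_ ?_ ?_ ?_ ?_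
  · intro N ω
    have : ‖p N (ω : AddCircle (1:ℝ))‖ ≤ 2 := by
      calc ‖p N (ω : AddCircle (1:ℝ))‖
          ≤ ‖p N (ω : AddCircle (1:ℝ)) - φ N (ω : AddCircle (1:ℝ))‖ + ‖φ N (ω : AddCircle (1:ℝ))‖ := by
            simpa using norm_add_le (p N (ω : AddCircle (1:ℝ)) - φ N (ω : AddCircle (1:ℝ))) (φ N (ω : AddCircle (1:ℝ)))
        _ ≤ 1/((N:ℝ)+1) + 1 := by
            refine add_le_add (hpev N ω).le ?_
            rw [hφcoe]; exact (hnorm1 N _).le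
        _ ≤ 2 := by
            have : 1/((N:ℝ)+1) ≤ 1 := by
              rw [div_le_one (by positivity)]
              simp
            linarith
    exact_mod_cast this
  · exact fun N => ((p N).continuous.comp (AddCircle.continuous_mk' 1)).aestronglyMeasurable
  · refine (Complex.measurable_exp.comp ?_).aestronglyMeasurable
    exact (Complex.measurable_ofReal.comp (measurable_fract.const_mul θ)).mul_const _
  · intro ω
    have : ‖M ω‖ ≤ (2:ℝ) := by
      rw [hM]
      simp [Complex.norm_exp]
    exact_mod_cast this
  · intro ω
    rw [tendsto_iff_norm_sub_tendsto_zero]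
    have hf1 : Int.fract ω < 1 := Int.fract_lt_one ω
    refine squeeze_zero' ?_ ?_ tendsto_one_div_add_atTop_nhds_zero_nat
    · exact Filter.Eventually.of_forall fun N => norm_nonneg _
    · rw [Filter.eventually_atTop]
      refine ⟨⌈(1 - Int.fract ω)⁻¹⌉₊, fun N hN => ?_⟩
      have hMeq : h N (Int.fract ω) = M ω := by
        have hge : ((N:ℝ)+1) * (1 - Int.fract ω) ≥ 1 := by
          have h1 : (1 - Int.fract ω)⁻¹ ≤ (N:ℝ) + 1 := by
            calc (1 - Int.fract ω)⁻¹ ≤ (⌈(1 - Int.fract ω)⁻¹⌉₊ : ℝ) := Nat.le_ceil _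
              _ ≤ (N:ℝ) := by exact_mod_cast hN
              _ ≤ (N:ℝ) + 1 := by linarith
          calc (1:ℝ) = (1 - Int.fract ω)⁻¹ * (1 - Int.fract ω) := by
                rw [inv_mul_cancel₀ (by linarith)]
            _ ≤ ((N:ℝ)+1) * (1 - Int.fract ω) := by
                refine mul_le_mul_of_nonneg_right h1 (by linarith)
        rw [hh, hM]
        simp only
        rw [min_eq_left hge, mul_one]
      calc ‖p N (ω : AddCircle (1:ℝ)) - M ω‖ = ‖p N (ω : AddCircle (1:ℝ)) - φ N (ω : AddCircle (1:ℝ))‖ := by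
            rw [hφcoe, hMeq]
        _ ≤ 1/((N:ℝ)+1) := (hpev N ω).le
/-- the index of the unique `Bset n k`, `k < n`, containing `ω` -/
def kOf (n : ℕ) (ω : ℝ) : ℕ := (⌊ω⌋ % (n : ℤ)).toNat

lemma kOf_lt {n : ℕ} (hn : 0 < n) (ω : ℝ) : kOf n ω < n := by
  have h1 : ⌊ω⌋ % (n : ℤ) < n := Int.emod_lt_of_pos _ (by exact_mod_cast hn)
  have h2 : 0 ≤ ⌊ω⌋ % (n : ℤ) := Int.emod_nonneg _ (by exact_mod_cast hn.ne')
  have h3 : ((kOf n ω : ℕ) : ℤ) = ⌊ω⌋ % (n : ℤ) := by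
    simp [kOf, Int.toNat_of_nonneg h2]
  omega

lemma kOf_cast {n : ℕ} (hn : 0 < n) (ω : ℝ) : ((kOf n ω : ℕ) : ℤ) = ⌊ω⌋ % (n : ℤ) := by
  have h2 : 0 ≤ ⌊ω⌋ % (n : ℤ) := Int.emod_nonneg _ (by exact_mod_cast hn.ne')
  simp [kOf, Int.toNat_of_nonneg h2]

lemma Bset_mem_iff {n k : ℕ} (hn : 0 < n) (hk : k < n) (ω : ℝ) :
    ω ∈ Bset n k ↔ k = kOf n ω := by
  constructor
  · rintro ⟨j, h1, h2⟩
    have hcast : (n : ℝ) * j = ((n * j : ℤ) : ℝ) := by push_cast; ring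
    have hfloor : ⌊ω - (n:ℝ) * j⌋ = (k : ℤ) := by
      rw [Int.floor_eq_iff]
      constructor
      · exact_mod_cast h1
      · exact_mod_cast h2
    rw [hcast, Int.floor_sub_intCast] at hfloor
    have : ⌊ω⌋ = (k : ℤ) + n * j := by omega
    have he : ⌊ω⌋ % (n : ℤ) = (k : ℤ) := by
      rw [this, Int.add_mul_emod_self_left, Int.emod_eq_of_lt (by positivity) (by exact_mod_cast hk)]
    have := kOf_cast hn ω
    omega
  · intro h
    refine ⟨⌊ω⌋ / (n : ℤ), ?_, ?_⟩
    · have hdm : (n : ℤ) * (⌊ω⌋ / (n:ℤ)) + ⌊ω⌋ % (n:ℤ) = ⌊ω⌋ := Int.mul_ediv_add_emod _ _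
      have hk' : (k : ℤ) = ⌊ω⌋ % (n : ℤ) := by rw [h]; exact kOf_cast hn ω
      have hfl : ((⌊ω⌋ : ℤ) : ℝ) ≤ ω := Int.floor_le ω
      have hdmr : (n : ℝ) * ((⌊ω⌋ / (n:ℤ) : ℤ) : ℝ) + (((⌊ω⌋ % (n:ℤ)) : ℤ) : ℝ) = ((⌊ω⌋ : ℤ) : ℝ) := by
        exact_mod_cast congrArg (fun z : ℤ => (z : ℝ)) hdm
      have hkr : ((k : ℕ) : ℝ) = (((⌊ω⌋ % (n:ℤ)) : ℤ) : ℝ) := by exact_mod_cast hk'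
      linarith
    · have hdm : (n : ℤ) * (⌊ω⌋ / (n:ℤ)) + ⌊ω⌋ % (n:ℤ) = ⌊ω⌋ := Int.mul_ediv_add_emod _ _
      have hk' : (k : ℤ) = ⌊ω⌋ % (n : ℤ) := by rw [h]; exact kOf_cast hn ω
      have hfu : ω < ((⌊ω⌋ : ℤ) : ℝ) + 1 := Int.lt_floor_add_one ω
      have hdmr : (n : ℝ) * ((⌊ω⌋ / (n:ℤ) : ℤ) : ℝ) + (((⌊ω⌋ % (n:ℤ)) : ℤ) : ℝ) = ((⌊ω⌋ : ℤ) : ℝ) := by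
        exact_mod_cast congrArg (fun z : ℤ => (z : ℝ)) hdm
      have hkr : ((k : ℕ) : ℝ) = (((⌊ω⌋ % (n:ℤ)) : ℤ) : ℝ) := by exact_mod_cast hk'
      linarith

/-- the indicator of `Bset n k` as a `ℂ`-valued function -/
def chi (n k : ℕ) : ℝ → ℂ := Set.indicator (Bset n k) (fun _ => (1 : ℂ))

lemma chi_of_mem {n k : ℕ} {ω : ℝ} (h : ω ∈ Bset n k) : chi n k ω = 1 :=
  Set.indicator_of_mem h _

lemma chi_of_not_mem {n k : ℕ} {ω : ℝ} (h : ω ∉ Bset n k) : chi n k ω = 0 :=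
  Set.indicator_of_notMem h _

lemma chi_eq_ite {n k : ℕ} (hn : 0 < n) (hk : k < n) (ω : ℝ) :
    chi n k ω = if k = kOf n ω then 1 else 0 := by
  by_cases h : k = kOf n ω
  · rw [if_pos h, chi_of_mem ((Bset_mem_iff hn hk ω).mpr h)]
  · rw [if_neg h, chi_of_not_mem (fun hc => h ((Bset_mem_iff hn hk ω).mp hc))]

lemma chi_partition {n : ℕ} (hn : 0 < n) (ω : ℝ) :
    ∑ k ∈ Finset.range n, chi n k ω = 1 := by
  rw [Finset.sum_eq_single (kOf n ω)]
  · exact chi_of_mem ((Bset_mem_iff hn (kOf_lt hn ω) ω).mpr rfl)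
  · intro k hk hne
    exact chi_of_not_mem fun hc => hne ((Bset_mem_iff hn (Finset.mem_range.mp hk) ω).mp hc)
  · intro h
    exact absurd (Finset.mem_range.mpr (kOf_lt hn ω)) h

lemma exp_eq_exp_of_int {r s : ℝ} (m : ℤ) (h : r - s = 2 * π * m) :
    Complex.exp ((r : ℝ) * Complex.I) = Complex.exp ((s : ℝ) * Complex.I) := by
  have hc : (r : ℂ) - s = 2 * π * m := by exact_mod_cast congrArg (fun x : ℝ => (x : ℂ)) h
  rw [show ((r : ℝ) : ℂ) * Complex.I = ((s : ℝ) : ℂ) * Complex.I + (m : ℂ) * (2 * π * Complex.I) by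
    linear_combination Complex.I * hc]
  rw [Complex.exp_add, Complex.exp_int_mul_two_pi_mul_I, mul_one]

lemma exp_mul_exp (r s : ℝ) :
    Complex.exp ((r : ℝ) * Complex.I) * Complex.exp ((s : ℝ) * Complex.I) =
      Complex.exp (((r + s : ℝ) : ℂ) * Complex.I) := by
  rw [← Complex.exp_add, Complex.ofReal_add, add_mul]

lemma key_sum {n : ℕ} (hn : 0 < n) {k : ℕ} (hk : k < n) (ω : ℝ) :
    chi n k ω = ∑ j ∈ Finset.range n,
      (1/(n:ℂ)) * Complex.exp (((2 * π * k * j / n : ℝ) : ℂ) * Complex.I) *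
        (Complex.exp (((2 * π * j / n * Int.fract ω : ℝ) : ℂ) * Complex.I) * eChar ((j:ℝ)/n) ω) := by
  have hn' : (n : ℝ) ≠ 0 := by exact_mod_cast hn.ne'
  set d : ℕ := kOf n ω with hd
  set q : ℤ := ⌊ω⌋ / (n : ℤ) with hq
  have hfloor : ((⌊ω⌋ : ℤ) : ℝ) = (n : ℝ) * (q : ℝ) + (d : ℝ) := by
    have h1 : (n : ℤ) * q + (d : ℤ) = ⌊ω⌋ := by
      rw [hd, kOf_cast hn ω, hq]; exact Int.mul_ediv_add_emod _ _
    exact_mod_cast congrArg (fun z : ℤ => (z : ℝ)) h1.symm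
  have hfract : Int.fract ω = ω - ((⌊ω⌋ : ℤ) : ℝ) := rfl
  set w : ℝ := 2 * π * ((k : ℝ) - (d : ℝ)) / n with hw
  set z : ℂ := Complex.exp ((w : ℂ) * Complex.I) with hz
  have hterm : ∀ j ∈ Finset.range n,
      (1/(n:ℂ)) * Complex.exp (((2 * π * k * j / n : ℝ) : ℂ) * Complex.I) *
        (Complex.exp (((2 * π * j / n * Int.fract ω : ℝ) : ℂ) * Complex.I) * eChar ((j:ℝ)/n) ω)
        = (1/(n:ℂ)) * z ^ j := by
    intro j _
    rw [eChar, exp_mul_exp, mul_assoc, exp_mul_exp]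
    congr 1
    have e1 : Complex.exp (((2 * π * k * j / n + (2 * π * j / n * Int.fract ω +
        -(2 * π * ((j:ℝ)/n) * ω)) : ℝ) : ℂ) * Complex.I)
        = Complex.exp ((((j : ℝ) * w : ℝ) : ℂ) * Complex.I) := by
      refine exp_eq_exp_of_int (-(j * q)) ?_
      rw [hw]
      field_simp
      push_cast
      have hfq : Int.fract ω - ω + (n:ℝ) * (q:ℝ) + (d:ℝ) = 0 := by
        rw [hfract]; linarith [hfloor]
      linear_combination (j:ℝ) * hfq
    rw [e1, hz, ← Complex.exp_nat_mul]
    congr 1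
    push_cast
    ring
  rw [Finset.sum_congr rfl hterm, ← Finset.mul_sum]
  by_cases hkd : k = d
  · have hz1 : z = 1 := by
      rw [hz, hw, hkd]
      simp
    rw [hz1]
    simp only [one_pow, Finset.sum_const, Finset.card_range, nsmul_eq_mul, mul_one]
    rw [chi_of_mem ((Bset_mem_iff hn hk ω).mpr (hkd.trans hd ▸ rfl))]
    rw [one_div, inv_mul_cancel₀ (show (n:ℂ) ≠ 0 by exact_mod_cast hn.ne')]
  · have hzne : z ≠ 1 := by
      intro hcon
      obtain ⟨m, hm⟩ := Complex.exp_eq_one_iff.mp (hz ▸ hcon)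
      have h2 : (w : ℂ) * Complex.I = (2 * (π:ℝ) * (m:ℝ) : ℂ) * Complex.I := by
        rw [hm]; push_cast; ring
      have h3 : (w : ℂ) = ((2 * π * (m:ℝ) : ℝ) : ℂ) := by
        have := mul_right_cancel₀ Complex.I_ne_zero h2
        exact_mod_cast this
      have h4 : w = 2 * π * (m : ℝ) := by exact_mod_cast h3
      rw [hw] at h4
      have h5 : (k : ℝ) - (d : ℝ) = (n : ℝ) * m := by
        field_simp at h4
        nlinarith [Real.pi_pos, h4]
      have h6 : (k : ℤ) - (d : ℤ) = (n : ℤ) * m := by exact_mod_cast h5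
      have hdn : d < n := kOf_lt hn ω
      rcases lt_trichotomy m 0 with hm0 | hm0 | hm0
      · have : (n:ℤ) * m ≤ (n:ℤ) * (-1) := by
          refine mul_le_mul_of_nonneg_left (by omega) (by positivity)
        omega
      · rw [hm0] at h6; simp at h6; omega
      · have : (n:ℤ) * 1 ≤ (n:ℤ) * m := by
          refine mul_le_mul_of_nonneg_left (by omega) (by positivity)
        omega
    rw [geom_sum_eq hzne]
    have hzn : z ^ n = 1 := by
      rw [hz, ← Complex.exp_nat_mul]
      have : ((n : ℂ)) * ((w:ℂ) * Complex.I) = (((n : ℝ) * w : ℝ) : ℂ) * Complex.I := by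
        push_cast; ring
      rw [this]
      have : Complex.exp ((((n:ℝ) * w : ℝ) : ℂ) * Complex.I)
          = Complex.exp (((0 : ℝ) : ℂ) * Complex.I) := by
        refine exp_eq_exp_of_int ((k : ℤ) - (d : ℤ)) ?_
        rw [hw]
        field_simp
        push_cast; ring
      rw [this]; simp
    rw [hzn]
    simp only [sub_self, zero_div, mul_zero]
    exact chi_of_not_mem fun hc => hkd ((Bset_mem_iff hn hk ω).mp hc)

lemma key_echar {n : ℕ} (hn : 0 < n) (j : ℤ) (ω : ℝ) :
    eChar ((j:ℝ)/n) ω = ∑ k ∈ Finset.range n,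
      (Complex.exp (((-(2 * π * j * k / n) : ℝ) : ℂ) * Complex.I) *
       Complex.exp ((((-(2 * π * (j:ℝ) / n)) * Int.fract ω : ℝ) : ℂ) * Complex.I)) * chi n k ω := by
  have hn' : (n : ℝ) ≠ 0 := by exact_mod_cast hn.ne'
  set d : ℕ := kOf n ω with hd
  set q : ℤ := ⌊ω⌋ / (n : ℤ) with hq
  have hfloor : ((⌊ω⌋ : ℤ) : ℝ) = (n : ℝ) * (q : ℝ) + (d : ℝ) := by
    have h1 : (n : ℤ) * q + (d : ℤ) = ⌊ω⌋ := by
      rw [hd, kOf_cast hn ω, hq]; exact Int.mul_ediv_add_emod _ _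
    exact_mod_cast congrArg (fun z : ℤ => (z : ℝ)) h1.symm
  have hfract : Int.fract ω = ω - ((⌊ω⌋ : ℤ) : ℝ) := rfl
  rw [Finset.sum_eq_single d]
  · rw [chi_of_mem ((Bset_mem_iff hn (kOf_lt hn ω) ω).mpr rfl), mul_one, exp_mul_exp, eChar]
    refine exp_eq_exp_of_int (-(j * q)) ?_
    have hfq : Int.fract ω - ω + (n:ℝ) * (q:ℝ) + (d:ℝ) = 0 := by
      rw [hfract]; linarith [hfloor]
    field_simp
    push_cast
    linear_combination (j:ℝ) * hfq
  · intro k hk hne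
    rw [chi_of_not_mem fun hc => hne ((Bset_mem_iff hn (Finset.mem_range.mp hk) ω).mp hc), mul_zero]
  · intro h
    exact absurd (Finset.mem_range.mpr (kOf_lt hn ω)) h

lemma Bset_measurable (n k : ℕ) : MeasurableSet (Bset n k) := by
  have : Bset n k = ⋃ j : ℤ, Set.Ico ((k:ℝ) + n*j) ((k:ℝ) + 1 + n*j) := by
    ext ω
    simp only [Bset, Set.mem_setOf_eq, Set.mem_Ico, Set.mem_iUnion]
    constructor <;> rintro ⟨j, h1, h2⟩ <;> exact ⟨j, by linarith, by linarith⟩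
  rw [this]
  exact MeasurableSet.iUnion fun j => measurableSet_Ico

lemma chi_aesm (n k : ℕ) : AEStronglyMeasurable (chi n k) volume :=
  (measurable_const.indicator (Bset_measurable n k)).aestronglyMeasurable

lemma chi_norm_le (n k : ℕ) (ω : ℝ) : ‖chi n k ω‖ ≤ 1 := by
  by_cases h : ω ∈ Bset n k
  · rw [chi_of_mem h]; simp
  · rw [chi_of_not_mem h]; simp

lemma indicator_eq_chi_mul (n k : ℕ) (v : ℝ → ℂ) (ω : ℝ) :
    (Bset n k).indicator v ω = chi n k ω * v ω := by
  by_cases h : ω ∈ Bset n k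
  · rw [Set.indicator_of_mem h, chi_of_mem h, one_mul]
  · rw [Set.indicator_of_notMem h, chi_of_not_mem h, zero_mul]

lemma mult_chi {F : L2 ≃ₗᵢ[ℂ] L2} {S : Submodule ℂ L2} (hF : IsFourierTransform F)
    (hS : IsClosed (S : Set L2)) (hinv : ∀ f ∈ S, ∀ j : ℤ, Tr (j : ℝ) f ∈ S)
    {n : ℕ} (hn : 0 < n) (ha : ∀ f ∈ S, ∀ j : ℤ, Tr ((j : ℝ) / n) f ∈ S)
    {k : ℕ} (hk : k < n) : Mult F S (chi n k) := by
  have hterm : ∀ j ∈ Finset.range n, Mult F S (fun ω =>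
      (1/(n:ℂ)) * Complex.exp (((2 * π * k * j / n : ℝ) : ℂ) * Complex.I) *
        (Complex.exp (((2 * π * j / n * Int.fract ω : ℝ) : ℂ) * Complex.I) * eChar ((j:ℝ)/n) ω)) := by
    intro j _
    have htr : ∀ f ∈ S, Tr ((j:ℝ)/n) f ∈ S := by
      intro f hf
      have := ha f hf (j : ℤ)
      simpa using this
    have h1 : Mult F S (fun ω =>
        Complex.exp (((2 * π * j / n * Int.fract ω : ℝ) : ℂ) * Complex.I) * eChar ((j:ℝ)/n) ω) := by
      refine ((mult_fract hF hS hinv (2 * π * j / n)).mul (Mult.echar hF htr)).congr fun ω => rfl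
    exact (h1.smul ((1/(n:ℂ)) * Complex.exp (((2 * π * k * j / n : ℝ) : ℂ) * Complex.I))).congr
      fun ω => by ring
  exact (Mult.sum hterm).congr fun ω => (key_sum hn hk ω).symm

lemma Lp_coeFn_sum {ι : Type*} (s : Finset ι) (u : ι → L2) :
    (↑(∑ i ∈ s, u i) : ℝ → ℂ) =ᵐ[volume] fun ω => ∑ i ∈ s, (u i : ℝ → ℂ) ω := by
  classical
  induction s using Finset.induction_on with
  | empty =>
    simp only [Finset.sum_empty]
    exact Lp.coeFn_zero ℂ 2 volume
  | @insert a s' hx ih =>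
    simp only [Finset.sum_insert hx]
    filter_upwards [Lp.coeFn_add (u a) (∑ i ∈ s', u i), ih] with ω w1 w2
    rw [w1, Pi.add_apply, w2]
section Main
variable {F : L2 ≃ₗᵢ[ℂ] L2} {S : Submodule ℂ L2} {n : ℕ}

/-- the canonical truncation of `f` to `Bset n k`, as an element of `L2` -/
def trunc (F : L2 ≃ₗᵢ[ℂ] L2) (n k : ℕ) (f : L2) : L2 :=
  F.symm ((memLp_mul (chi n k) (chi_aesm n k) (chi_norm_le n k) (F f)).toLp _)

lemma trunc_coe (f : L2) (k : ℕ) :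
    (F (trunc F n k f) : ℝ → ℂ) =ᵐ[volume] fun ω => chi n k ω * (F f : ℝ → ℂ) ω := by
  rw [trunc, F.apply_symm_apply]
  exact MemLp.coeFn_toLp _

lemma trunc_mem_Uspace (hn : 0 < n) {f : L2} (hf : f ∈ S) (k : ℕ) :
    trunc F n k f ∈ Uspace F (S : Set L2) n k := by
  refine ⟨f, hf, (trunc_coe f k).trans ?_⟩
  exact Filter.Eventually.of_forall fun ω => (indicator_eq_chi_mul n k _ ω).symm

lemma AtoC (hF : IsFourierTransform F) (hS : IsClosed (S : Set L2))
    (hinv : ∀ f ∈ S, ∀ j : ℤ, Tr (j : ℝ) f ∈ S) (hn : 0 < n)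
    (ha : ∀ f ∈ S, ∀ j : ℤ, Tr ((j : ℝ) / n) f ∈ S) :
    ∀ f ∈ S, ∀ k < n, ∀ g : L2,
      (F g : ℝ → ℂ) =ᵐ[volume] (Bset n k).indicator (F f : ℝ → ℂ) → g ∈ S := by
  intro f hf k hk g hg
  refine (mult_chi hF hS hinv hn ha hk).mem hf ?_
  exact hg.trans (Filter.Eventually.of_forall fun ω => indicator_eq_chi_mul n k _ ω)

lemma BtoA (hF : IsFourierTransform F) (hS : IsClosed (S : Set L2))
    (hinv : ∀ f ∈ S, ∀ j : ℤ, Tr (j : ℝ) f ∈ S) (hn : 0 < n)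
    (hb : ∀ k < n, Uspace F (S : Set L2) n k ⊆ (S : Set L2)) :
    ∀ f ∈ S, ∀ j : ℤ, Tr ((j : ℝ) / n) f ∈ S := by
  intro f hf j
  set v : ℝ → ℂ := (F f : ℝ → ℂ) with hv
  set u : Fin n → L2 := fun k => trunc F n k f with hu
  have huS : ∀ k : Fin n, u k ∈ S := fun k => hb k k.isLt (trunc_mem_Uspace hn hf k)
  set m : ℕ → ℝ → ℂ := fun k ω =>
      Complex.exp (((-(2 * π * j * k / n) : ℝ) : ℂ) * Complex.I) *
       Complex.exp ((((-(2 * π * (j:ℝ) / n)) * Int.fract ω : ℝ) : ℂ) * Complex.I) with hm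
  have hmult : ∀ k : ℕ, Mult F S (m k) := by
    intro k
    exact ((mult_fract hF hS hinv (-(2 * π * (j:ℝ) / n))).smul
      (Complex.exp (((-(2 * π * j * k / n) : ℝ) : ℂ) * Complex.I))).congr fun ω => rfl
  have hex : ∀ k : Fin n, ∃ g ∈ S,
      (F g : ℝ → ℂ) =ᵐ[volume] fun ω => m k ω * (F (u k) : ℝ → ℂ) ω :=
    fun k => hmult k (u k) (huS k)
  choose g hgS hge using hex
  have hgsum : (F (∑ k : Fin n, g k) : ℝ → ℂ) =ᵐ[volume]
      fun ω => ∑ k : Fin n, m k ω * (chi n k ω * v ω) := by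
    rw [map_sum]
    have h1 := Lp_coeFn_sum Finset.univ (fun k : Fin n => F (g k))
    have h2 : ∀ᵐ ω ∂(volume : Measure ℝ), ∀ k : Fin n,
        (F (g k) : ℝ → ℂ) ω = m k ω * ((F (u k) : ℝ → ℂ) ω) := ae_all_iff.mpr fun k => hge k
    have h3 : ∀ᵐ ω ∂(volume : Measure ℝ), ∀ k : Fin n,
        (F (u k) : ℝ → ℂ) ω = chi n k ω * v ω := ae_all_iff.mpr fun k => trunc_coe f k
    filter_upwards [h1, h2, h3] with ω w1 w2 w3
    rw [w1]
    exact Finset.sum_congr rfl fun k _ => by rw [w2 k, w3 k]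
  have htr : (F (Tr ((j:ℝ)/n) f) : ℝ → ℂ) =ᵐ[volume]
      fun ω => ∑ k : Fin n, m k ω * (chi n k ω * v ω) := by
    refine (FT_Tr F hF _ f).trans (Filter.Eventually.of_forall fun ω => ?_)
    show eChar ((j:ℝ)/n) ω * v ω = ∑ k : Fin n, m k ω * (chi n k ω * v ω)
    rw [key_echar hn j ω, Finset.sum_mul, ← Fin.sum_univ_eq_sum_range
      (fun k => (m k ω * chi n k ω) * v ω) n]
    exact Finset.sum_congr rfl fun k _ => by ring
  have : Tr ((j:ℝ)/n) f = ∑ k : Fin n, g k := F.injective (Lp.ext (htr.trans hgsum.symm))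
  rw [this]
  exact Submodule.sum_mem S fun k _ => hgS k

lemma decomp (hn : 0 < n) {f : L2} (hf : f ∈ S) :
    ∃ u : Fin n → L2, (∀ k : Fin n, u k ∈ Uspace F (S : Set L2) n k) ∧
      f = ∑ k : Fin n, u k := by
  refine ⟨fun k => trunc F n k f, fun k => trunc_mem_Uspace hn hf k, ?_⟩
  refine F.injective (Lp.ext ?_)
  rw [map_sum]
  have h1 := Lp_coeFn_sum Finset.univ (fun k : Fin n => F (trunc F n (k : ℕ) f))
  have h2 : ∀ᵐ ω ∂(volume : Measure ℝ), ∀ k : Fin n,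
      (F (trunc F n (k : ℕ) f) : ℝ → ℂ) ω = chi n k ω * (F f : ℝ → ℂ) ω :=
    ae_all_iff.mpr fun k => trunc_coe f k
  filter_upwards [h1, h2] with ω w1 w2
  rw [w1]
  have : ∑ k : Fin n, (F (trunc F n (k:ℕ) f) : ℝ → ℂ) ω
      = ∑ k : Fin n, chi n (k:ℕ) ω * (F f : ℝ → ℂ) ω := Finset.sum_congr rfl fun k _ => w2 k
  rw [this, ← Finset.sum_mul, Fin.sum_univ_eq_sum_range (fun k => chi n k ω) n,
    chi_partition hn ω, one_mul]

lemma orth (hn : 0 < n) {k l : ℕ} (hk : k < n) (hl : l < n) (hkl : k ≠ l)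
    {u v : L2} (hu : u ∈ Uspace F (S : Set L2) n k) (hv : v ∈ Uspace F (S : Set L2) n l) :
    (inner ℂ u v : ℂ) = 0 := by
  obtain ⟨a, _, hea⟩ := hu
  obtain ⟨b, _, heb⟩ := hv
  rw [← LinearIsometryEquiv.inner_map_map F u v, MeasureTheory.L2.inner_def]
  rw [← integral_zero ℝ ℂ]
  refine integral_congr_ae ?_
  filter_upwards [hea, heb] with ω w1 w2
  rw [w1, w2]
  by_cases h : ω ∈ Bset n k
  · have h2 : ω ∉ Bset n l := by
      intro hc
      exact hkl (((Bset_mem_iff hn hk ω).mp h).trans ((Bset_mem_iff hn hl ω).mp hc).symm)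
    rw [Set.indicator_of_notMem h2, inner_zero_right]
  · rw [Set.indicator_of_notMem h, inner_zero_left]

end Main


/-- Characterization of `(1/n)ℤ`-invariance of a SIS `S` in terms of the subspaces `U_k`,
together with the orthogonal decomposition `S = U_0 ⊕ ⋯ ⊕ U_{n-1}`. -/
theorem stmt10 (F : L2 ≃ₗᵢ[ℂ] L2) (hF : IsFourierTransform F)
    (n : ℕ) (hn : 0 < n)
    (S : Submodule ℂ L2) (hS : IsClosed (S : Set L2))
    (hinv : ∀ f ∈ S, ∀ j : ℤ, Tr (j : ℝ) f ∈ S) :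
    (((∀ f ∈ S, ∀ j : ℤ, Tr ((j : ℝ) / n) f ∈ S) ↔
        (∀ k < n, Uspace F (S : Set L2) n k ⊆ (S : Set L2))) ∧
     ((∀ f ∈ S, ∀ j : ℤ, Tr ((j : ℝ) / n) f ∈ S) ↔
        (∀ f ∈ S, ∀ k < n, ∀ g : L2,
          (F g : ℝ → ℂ) =ᵐ[volume] (Bset n k).indicator (F f : ℝ → ℂ) → g ∈ S))) ∧
    ((∀ f ∈ S, ∀ j : ℤ, Tr ((j : ℝ) / n) f ∈ S) →
      ((∀ f ∈ S, ∃ u : Fin n → L2, (∀ k : Fin n, u k ∈ Uspace F (S : Set L2) n k) ∧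
          f = ∑ k : Fin n, u k) ∧
       (∀ k l : Fin n, k ≠ l → ∀ u ∈ Uspace F (S : Set L2) n (k : ℕ),
          ∀ v ∈ Uspace F (S : Set L2) n (l : ℕ), (inner ℂ u v : ℂ) = 0))) := by
  constructor
  · constructor
    · constructor
      · intro ha k hk u hu
        obtain ⟨g, hgS, he⟩ := hu
        exact AtoC hF hS hinv hn ha g hgS k hk u he
      · exact fun hb => BtoA hF hS hinv hn hb
    · constructor
      · exact fun ha => AtoC hF hS hinv hn ha
      · intro hc
        refine BtoA hF hS hinv hn ?_
        intro k hk u hu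
        obtain ⟨g, hgS, he⟩ := hu
        exact hc g hgS k hk u he
  · intro _
    constructor
    · exact fun f hf => decomp hn hf
    · intro k l hkl u hu v hv
      exact orth hn k.isLt l.isLt (fun h => hkl (Fin.ext h)) hu hv
end
end
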